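/- arXiv:0706.3520 — 4 statements merged into one kernel-verified Lean document; each statement's English description precedes it below -/
import Mathlib

section
/- Let X₁,…,X_m be independent real‑valued random variables with values in [0,1] and continuous cumulative distribution functions, and let Y₁ ≤ Y₂ ≤ … ≤ Y_m be their order statistics. Let 0 = c₁ < d₁ < c₂ < d₂ < … < c_s < d_s = 1 be endpoints of s disjoint intervals (c_q, d_q), and let k₁,…,k_s be positive integers with k₁ + … + k_s = m. For each q set w_{q,1} = 1 + Σ_{i=1}^{q−1} k_i and w_{q,k_q} = Σ_{i=1}^{q} k_i. Let E = ⋂_{q=1}^{s} ({c_q < Y_{w_{q,1}}} ∩ {Y_{w_{q,k_q}} < d_q}) be the event that exactly k_q of the order statistics fall in the q‑th interval for every q, and let B be an arbitrary event. Then Pr(E ∩ B) = Σ_{T ⊆ {1,…,s}} (−1)^{|T|} · Pr( ⋂_{q ∈ T} {Y_{w_{q,1}} ≤ c_q} ∩ ⋂_{q=1}^{s} {Y_{w_{q,k_q}} ≤ d_q} ∩ B ); that is, the probability equals the inclusion–exclusion alternating sum, over subsets of the lower endpoints, of the joint cumulative distribution functions of the indicated order statistics relative to the event B. -/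
open MeasureTheory ProbabilityTheory


/-- Inclusion–exclusion for measures: probability of avoiding all `A i`, `i ∈ s`,
intersected with `D`. -/
lemma incl_excl_aux {Ω : Type*} [MeasurableSpace Ω] (μ : Measure Ω) [IsFiniteMeasure μ]
    {ι : Type*} [DecidableEq ι] (A : ι → Set Ω) (hA : ∀ i, MeasurableSet (A i)) (s : Finset ι) :
    ∀ D : Set Ω, (μ ((⋂ i ∈ s, (A i)ᶜ) ∩ D)).toReal
      = ∑ T ∈ s.powerset, (-1:ℝ)^T.card * (μ ((⋂ i ∈ T, A i) ∩ D)).toReal := by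
  induction s using Finset.induction_on with
  | empty => intro D; simp
  | @insert a s' ha ih =>
    intro D
    have h1 : (⋂ i ∈ insert a s', (A i)ᶜ) ∩ D = (⋂ i ∈ s', (A i)ᶜ) ∩ ((A a)ᶜ ∩ D) := by
      ext ω; simp [Set.mem_iInter]; tauto
    rw [h1, ih ((A a)ᶜ ∩ D), Finset.sum_powerset_insert ha]
    have key : ∀ T : Finset ι, (μ ((⋂ i ∈ T, A i) ∩ ((A a)ᶜ ∩ D))).toReal
        = (μ ((⋂ i ∈ T, A i) ∩ D)).toReal - (μ ((⋂ i ∈ insert a T, A i) ∩ D)).toReal := by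
      intro T
      have hset1 : (⋂ i ∈ T, A i) ∩ ((A a)ᶜ ∩ D) = ((⋂ i ∈ T, A i) ∩ D) \ A a := by
        ext ω; simp [Set.mem_iInter]; tauto
      have hset2 : (⋂ i ∈ insert a T, A i) ∩ D = ((⋂ i ∈ T, A i) ∩ D) ∩ A a := by
        ext ω; simp [Set.mem_iInter]; tauto
      rw [hset1, hset2]
      have := measure_inter_add_diff ((⋂ i ∈ T, A i) ∩ D) (hA a) (μ := μ)
      have h2 : (μ (((⋂ i ∈ T, A i) ∩ D) ∩ A a)).toReal + (μ (((⋂ i ∈ T, A i) ∩ D) \ A a)).toReal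
          = (μ ((⋂ i ∈ T, A i) ∩ D)).toReal := by
        rw [← ENNReal.toReal_add (measure_ne_top μ _) (measure_ne_top μ _), this]
      linarith
    calc ∑ T ∈ s'.powerset, (-1:ℝ)^T.card * (μ ((⋂ i ∈ T, A i) ∩ ((A a)ᶜ ∩ D))).toReal
        = ∑ T ∈ s'.powerset, ((-1:ℝ)^T.card * (μ ((⋂ i ∈ T, A i) ∩ D)).toReal
            + (-1:ℝ)^(insert a T).card * (μ ((⋂ i ∈ insert a T, A i) ∩ D)).toReal) := by
          refine Finset.sum_congr rfl fun T hT => ?_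
          have haT : a ∉ T := fun h => ha (Finset.mem_powerset.mp hT h)
          rw [key T, Finset.card_insert_of_notMem haT, pow_succ]
          ring
      _ = _ := by rw [Finset.sum_add_distrib]

/-- Let `X₁, …, X_m` be independent random variables in `[0,1]` with
continuous cdfs and order statistics `Y₁ ≤ … ≤ Y_m`.  For disjoint intervals
`0 = c₁ < d₁ < c₂ < … < c_s < d_s = 1`, positive counts `k₁ + … + k_s = m`, with
`w₁ q` (resp. `wk q`) the 0-based index of the smallest (resp. largest) order statistic
assigned to the `q`-th interval, and any event `B`, the probability of
`E ∩ B = ⋂_q ({c_q < Y_{w_{q,1}}} ∩ {Y_{w_{q,k_q}} < d_q}) ∩ B` equals the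
inclusion–exclusion sum `∑_{T ⊆ {1,…,s}} (−1)^{|T|}
  Pr(⋂_{q∈T} {Y_{w_{q,1}} ≤ c_q} ∩ ⋂_q {Y_{w_{q,k_q}} ≤ d_q} ∩ B)`. -/
theorem stmt0 {Ω : Type*} [MeasurableSpace Ω] (μ : Measure Ω) [IsProbabilityMeasure μ]
    (m : ℕ) (X : Fin m → Ω → ℝ) (hmeas : ∀ i, Measurable (X i))
    (hrange : ∀ i ω, X i ω ∈ Set.Icc (0 : ℝ) 1)
    (hindep : iIndepFun X μ)
    (hcont : ∀ i, Continuous fun x => (μ {ω | X i ω ≤ x}).toReal)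
    -- the order statistics: `Y · ω` is the nondecreasing rearrangement of `X · ω`
    (Y : Fin m → Ω → ℝ)
    (hY : ∀ ω, (fun k => Y k ω) = (fun i => X i ω) ∘ Tuple.sort (fun i => X i ω))
    (s : ℕ) (hs : 0 < s) (c d : Fin s → ℝ)
    (hc0 : c ⟨0, hs⟩ = 0) (hd1 : d ⟨s - 1, Nat.sub_lt hs Nat.one_pos⟩ = 1)
    (hcd : ∀ q, c q < d q)
    (hdc : ∀ q : Fin s, ∀ h : (q : ℕ) + 1 < s, d q < c ⟨(q : ℕ) + 1, h⟩)
    (k : Fin s → ℕ) (hk : ∀ q, 0 < k q) (hksum : ∑ q, k q = m)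
    -- `w₁ q` is the 0-based index of `Y_{w_{q,1}}`, `wk q` that of `Y_{w_{q,k_q}}`
    (w₁ wk : Fin s → Fin m)
    (hw₁ : ∀ q, (w₁ q : ℕ) = ∑ i ∈ Finset.Iio q, k i)
    (hwk : ∀ q, (wk q : ℕ) + 1 = ∑ i ∈ Finset.Iic q, k i)
    (B : Set Ω) (hB : MeasurableSet B) :
    (μ ({ω | ∀ q, c q < Y (w₁ q) ω ∧ Y (wk q) ω < d q} ∩ B)).toReal
      = ∑ T : Finset (Fin s), (-1 : ℝ) ^ T.card
          * (μ ({ω | ∀ q ∈ T, Y (w₁ q) ω ≤ c q}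
              ∩ {ω | ∀ q, Y (wk q) ω ≤ d q} ∩ B)).toReal := by
  classical
  -- each point mass of each `X i` is null, by continuity of the cdf
  have hnull : ∀ (i : Fin m) (t : ℝ), μ {ω | X i ω = t} = 0 := by
    intro i t
    have hb : ∀ n : ℕ, (μ {ω | X i ω = t}).toReal
        ≤ (μ {ω | X i ω ≤ t}).toReal - (μ {ω | X i ω ≤ t - 1/(n+1)}).toReal := by
      intro n
      have hpos : (0:ℝ) < 1/(n+1) := by positivity
      have hsub2 : {ω | X i ω ≤ t - 1/(n+1)} ⊆ {ω | X i ω ≤ t} := fun ω h => by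
        simp only [Set.mem_setOf_eq] at h ⊢; linarith
      have hsub : {ω | X i ω = t} ⊆ {ω | X i ω ≤ t} \ {ω | X i ω ≤ t - 1/(n+1)} := by
        intro ω h
        simp only [Set.mem_setOf_eq] at h
        refine ⟨by simp [Set.mem_setOf_eq, h], ?_⟩
        simp only [Set.mem_setOf_eq, h]
        linarith
      have hd : μ ({ω | X i ω ≤ t} \ {ω | X i ω ≤ t - 1/(n+1)})
          = μ {ω | X i ω ≤ t} - μ {ω | X i ω ≤ t - 1/(n+1)} :=
        measure_diff hsub2 ((hmeas i measurableSet_Iic).nullMeasurableSet) (measure_ne_top μ _)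
      calc (μ {ω | X i ω = t}).toReal
          ≤ (μ ({ω | X i ω ≤ t} \ {ω | X i ω ≤ t - 1/(n+1)})).toReal :=
            ENNReal.toReal_mono (measure_ne_top μ _) (measure_mono hsub)
        _ = (μ {ω | X i ω ≤ t}).toReal - (μ {ω | X i ω ≤ t - 1/(n+1)}).toReal := by
            rw [hd, ENNReal.toReal_sub_of_le (measure_mono hsub2) (measure_ne_top μ _)]
    have hlim : Filter.Tendsto
        (fun n : ℕ => (μ {ω | X i ω ≤ t}).toReal - (μ {ω | X i ω ≤ t - 1/(n+1)}).toReal)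
        Filter.atTop (nhds 0) := by
      have h1 : Filter.Tendsto (fun n : ℕ => t - 1/((n:ℝ)+1)) Filter.atTop (nhds t) := by
        have := tendsto_one_div_add_atTop_nhds_zero_nat (𝕜 := ℝ)
        have h2 := Filter.Tendsto.sub (tendsto_const_nhds (x := t)) this
        simpa using h2
      have h3 := ((hcont i).continuousAt (x := t)).tendsto.comp h1
      have h4 := Filter.Tendsto.sub (tendsto_const_nhds (x := (μ {ω | X i ω ≤ t}).toReal)) h3
      simpa using h4
    have hle : (μ {ω | X i ω = t}).toReal ≤ 0 := ge_of_tendsto' hlim hb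
    have := le_antisymm hle ENNReal.toReal_nonneg
    rcases (ENNReal.toReal_eq_zero_iff _).mp this with h | h
    · exact h
    · exact absurd h (measure_ne_top μ _)
  -- `Y j ω` is always one of the `X i ω`
  have hYval : ∀ (j : Fin m) (ω : Ω), ∃ i, Y j ω = X i ω := by
    intro j ω
    exact ⟨Tuple.sort (fun i => X i ω) j, congrFun (hY ω) j⟩
  -- sublevel-set characterization of the order statistics
  have hYle : ∀ (j : Fin m) (t : ℝ) (ω : Ω),
      Y j ω ≤ t ↔ (j:ℕ) + 1 ≤ (Finset.univ.filter (fun i => X i ω ≤ t)).card := by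
    intro j t ω
    set f : Fin m → ℝ := fun i => X i ω with hf
    set σ : Equiv.Perm (Fin m) := Tuple.sort f with hσ
    have hg : Monotone (f ∘ σ) := Tuple.monotone_sort f
    have h1 : Y j ω = (f ∘ σ) j := congrFun (hY ω) j
    have h2 := Tuple.lt_card_le_iff_apply_le_of_monotone (f := f ∘ σ) (a := t) (j := j) hg
    rw [← Fintype.card_subtype] at h2
    have hcard : Fintype.card {i // (f ∘ σ) i ≤ t} = Fintype.card {i // f i ≤ t} :=
      Fintype.card_congr (σ.subtypeEquiv (fun i => Iff.rfl))
    have hcard2 : Fintype.card {i // f i ≤ t} = (Finset.univ.filter (fun i => X i ω ≤ t)).card :=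
      Fintype.card_subtype _
    rw [h1, ← h2, hcard, hcard2]
    constructor
    · intro h; omega
    · intro h
      exact lt_of_lt_of_le (by omega : (j:ℕ) < (j:ℕ)+1) h
  -- measurability of sublevel sets of the order statistics
  have hYmeasSet : ∀ (j : Fin m) (t : ℝ), MeasurableSet {ω | Y j ω ≤ t} := by
    intro j t
    have hset : {ω | Y j ω ≤ t}
        = {ω | (j:ℕ) + 1 ≤ (Finset.univ.filter (fun i => X i ω ≤ t)).card} := by
      ext ω; exact hYle j t ω
    rw [hset]
    have hfun : Measurable (fun ω => (Finset.univ.filter (fun i => X i ω ≤ t)).card) := by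
      have : (fun ω => (Finset.univ.filter (fun i => X i ω ≤ t)).card)
          = fun ω => ∑ i, if X i ω ≤ t then 1 else 0 := by
        funext ω; rw [Finset.card_filter]
      rw [this]
      exact Finset.measurable_sum _ (fun i _ =>
        Measurable.ite (measurableSet_le (hmeas i) measurable_const)
          measurable_const measurable_const)
    exact hfun measurableSet_Ici
  set A : Fin s → Set Ω := fun q => {ω | Y (w₁ q) ω ≤ c q} with hA
  set D : Set Ω := {ω | ∀ q, Y (wk q) ω ≤ d q} ∩ B with hD
  have hAmeas : ∀ q, MeasurableSet (A q) := fun q => hYmeasSet _ _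
  -- the null difference set
  have hNnull : μ (⋃ q : Fin s, {ω | Y (wk q) ω = d q}) = 0 := by
    refine measure_iUnion_null fun q => ?_
    have hsub : {ω | Y (wk q) ω = d q} ⊆ ⋃ i : Fin m, {ω | X i ω = d q} := by
      intro ω h
      simp only [Set.mem_setOf_eq] at h
      obtain ⟨i, hi⟩ := hYval (wk q) ω
      exact Set.mem_iUnion.mpr ⟨i, by simp [Set.mem_setOf_eq, ← hi, h]⟩
    exact measure_mono_null hsub (measure_iUnion_null fun i => hnull i (d q))
  -- replace the strict event by the closed/complement one
  have hE : μ ({ω | ∀ q, c q < Y (w₁ q) ω ∧ Y (wk q) ω < d q} ∩ B)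
      = μ ((⋂ q ∈ (Finset.univ : Finset (Fin s)), (A q)ᶜ) ∩ D) := by
    set E₁ := {ω | ∀ q, c q < Y (w₁ q) ω ∧ Y (wk q) ω < d q} ∩ B with hE₁
    set E₂ := (⋂ q ∈ (Finset.univ : Finset (Fin s)), (A q)ᶜ) ∩ D with hE₂
    have hsub : E₁ ⊆ E₂ := by
      rintro ω ⟨h1, h2⟩
      simp only [Set.mem_setOf_eq] at h1
      refine ⟨?_, fun q => (h1 q).2.le, h2⟩
      refine Set.mem_iInter.mpr fun q => Set.mem_iInter.mpr fun _ => ?_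
      exact not_le.mpr (h1 q).1
    have hdiff : E₂ \ E₁ ⊆ ⋃ q : Fin s, {ω | Y (wk q) ω = d q} := by
      intro ω hω
      obtain ⟨⟨hcomp, hle, hBω⟩, hnot⟩ := hω
      have hcomp' : ∀ q, ¬ (Y (w₁ q) ω ≤ c q) := fun q =>
        Set.mem_iInter.mp (Set.mem_iInter.mp hcomp q) (Finset.mem_univ q)
      simp only [hE₁, Set.mem_inter_iff, Set.mem_setOf_eq, not_and_or, not_forall] at hnot
      rcases hnot with hnot | hnot
      · obtain ⟨q, hq⟩ := hnot
        rcases hq with hq | hq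
        · exact absurd (not_lt.mp hq) (hcomp' q)
        · exact Set.mem_iUnion.mpr ⟨q, le_antisymm (hle q) (not_lt.mp hq)⟩
      · exact absurd hBω hnot
    refine le_antisymm (measure_mono hsub) ?_
    calc μ E₂ ≤ μ (E₁ ∪ (E₂ \ E₁)) := measure_mono (fun ω h => by
          by_cases hω : ω ∈ E₁
          · exact Or.inl hω
          · exact Or.inr ⟨h, hω⟩)
      _ ≤ μ E₁ + μ (E₂ \ E₁) := measure_union_le _ _
      _ ≤ μ E₁ + μ (⋃ q : Fin s, {ω | Y (wk q) ω = d q}) := by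
          exact add_le_add_right (measure_mono hdiff) _
      _ = μ E₁ := by rw [hNnull, add_zero]
  rw [hE, incl_excl_aux μ A hAmeas Finset.univ D, Finset.powerset_univ]
  refine Finset.sum_congr rfl fun T _ => ?_
  have hTeq : (⋂ i ∈ T, A i) ∩ D
      = {ω | ∀ q ∈ T, Y (w₁ q) ω ≤ c q} ∩ {ω | ∀ q, Y (wk q) ω ≤ d q} ∩ B := by
    ext ω
    simp only [Set.mem_inter_iff, Set.mem_iInter, hA, hD, Set.mem_setOf_eq]
    tauto
  rw [hTeq]
end

section
/- Let X₁,…,X_m be independent real‑valued random variables with values in [0,1] such that X₁,…,X_n all have the common continuous cumulative distribution function F and X_{n+1},…,X_m all have the common continuous cumulative distribution function G, and let Y₁ ≤ … ≤ Y_m be the order statistics of X₁,…,X_m. Fix indices 1 ≤ n₁ < n₂ < … < n_e ≤ m, points 0 = y₀ ≤ y₁ ≤ … ≤ y_e ≤ y_{e+1} = 1, and an integer 0 ≤ j ≤ n, and let B be the event that exactly j of X₁,…,X_n fall in the interval [0, y₁]. Then Pr({Y_{n₁} ≤ y₁} ∩ {Y_{n₂} ≤ y₂} ∩ … ∩ {Y_{n_e}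 ≤ y_e} ∩ B) = Σ_{i ∈ I} Σ_{λ} n!(m−n)! · ∏_{a=1}^{e+1} [F(y_a) − F(y_{a−1})]^{λ_a} [G(y_a) − G(y_{a−1})]^{i_a − i_{a−1} − λ_a} / ( λ_a! (i_a − i_{a−1} − λ_a)! ), where the outer sum is over the index set I = { (i₀, i₁, …, i_{e+1}) : 0 = i₀ ≤ i₁ ≤ … ≤ i_e ≤ i_{e+1} = m and i_a ≥ n_a for all 1 ≤ a ≤ e }, and the inner sum is over all integer vectors λ = (λ₁, …, λ_{e+1}) with λ₁ = j, λ₁ + λ₂ + … + λ_{e+1} = n, and 0 ≤ λ_a ≤ i_a − i_{a−1} for every a. -/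
open MeasureTheory ProbabilityTheory
set_option maxHeartbeats 1000000

open Finset

section auxx
variable {α β : Type*} [Fintype α] [DecidableEq α] [Fintype β] [DecidableEq β]

-- L1: sorted-tuple count lemma
lemma sorted_le_iff {m : ℕ} (f : Fin m → ℝ) (t : ℝ) (k : Fin m) :
    (f ∘ Tuple.sort f) k ≤ t ↔ (k : ℕ) < (univ.filter fun i => f i ≤ t).card := by
  rw [← Tuple.lt_card_le_iff_apply_le_of_monotone (f := f ∘ Tuple.sort f) (a := t) (j := k) (Tuple.monotone_sort f)]
  have h1 : Fintype.card {i // (f ∘ Tuple.sort f) i ≤ t} =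
      (univ.filter fun i => (f ∘ Tuple.sort f) i ≤ t).card := Fintype.card_subtype _
  have h2 : (univ.filter fun i => (f ∘ Tuple.sort f) i ≤ t).card
      = (univ.filter fun i => f i ≤ t).card := by
    apply Finset.card_nbij' (fun i => Tuple.sort f i) (fun i => (Tuple.sort f).symm i)
    · intro i hi; simp only [mem_coe, mem_filter, mem_univ, true_and] at *; exact hi
    · intro i hi; simp only [mem_coe, mem_filter, mem_univ, true_and, Function.comp] at *
      simpa using hi
    · intro i _; simp
    · intro i _; simp
  rw [h2]

lemma count_pin (b₀ : β) (s : Finset α) :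
    ∀ (c : β → ℕ), (∑ b, c b) = s.card →
    (univ.filter (fun f : α → β => (∀ a, a ∉ s → f a = b₀)
        ∧ ∀ b, (s.filter fun a => f a = b).card = c b)).card * ∏ b, (c b).factorial
      = (s.card).factorial := by
  induction s using Finset.induction_on with
  | empty =>
    intro c hc
    have hc0 : ∀ b, c b = 0 := by simpa using hc
    have : (univ.filter (fun f : α → β => (∀ a, a ∉ (∅ : Finset α) → f a = b₀)
        ∧ ∀ b, ((∅ : Finset α).filter fun a => f a = b).card = c b)) = {fun _ => b₀} := by
      ext f
      simp only [mem_filter, mem_univ, true_and, mem_singleton]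
      constructor
      · rintro ⟨h1, _⟩; funext x; exact h1 x (notMem_empty x)
      · rintro rfl
        exact ⟨fun _ _ => rfl, fun b => by simp [hc0 b]⟩
    rw [this]
    simp [hc0]
  | @insert a s ha ih =>
    intro c hc
    rw [Finset.card_insert_of_notMem ha] at hc
    set T := univ.filter (fun f : α → β => (∀ x, x ∉ insert a s → f x = b₀)
        ∧ ∀ b, ((insert a s).filter fun x => f x = b).card = c b) with hT
    have hfib : ∀ b : β, (T.filter fun f => f a = b).card * ∏ b', (c b').factorial
        = c b * (s.card).factorial := by
      intro b
      by_cases hcb : c b = 0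
      · have : T.filter (fun f => f a = b) = ∅ := by
          rw [Finset.filter_eq_empty_iff]
          rintro f hf hfa
          rw [hT, mem_filter] at hf
          have h2 := hf.2.2 b
          have : a ∈ (insert a s).filter fun x => f x = b := by
            simp [hfa]
          have := Finset.card_pos.mpr ⟨a, this⟩
          omega
        rw [this]
        simp [hcb]
      · -- bijection with the count for s and decremented c
        set c' := Function.update c b (c b - 1) with hc'
        have hsum' : (∑ b', c' b') = s.card := by
          have e1 : (∑ b', c' b') = c' b + ∑ x ∈ univ.erase b, c' x :=
            (Finset.add_sum_erase univ c' (mem_univ b)).symm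
          have e2 : (∑ b', c b') = c b + ∑ x ∈ univ.erase b, c x :=
            (Finset.add_sum_erase univ c (mem_univ b)).symm
          have e3 : ∑ x ∈ univ.erase b, c' x = ∑ x ∈ univ.erase b, c x := by
            apply Finset.sum_congr rfl
            intro x hx
            rw [hc', Function.update_of_ne (Finset.ne_of_mem_erase hx)]
          have e4 : c' b = c b - 1 := by rw [hc', Function.update_self]
          omega
        have key : (T.filter fun f => f a = b).card
            = (univ.filter (fun f : α → β => (∀ x, x ∉ s → f x = b₀)
                ∧ ∀ b', (s.filter fun x => f x = b').card = c' b')).card := by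
          have hi : ∀ f ∈ (T.filter fun f => f a = b),
              Function.update f a b₀ ∈ (univ.filter (fun f : α → β => (∀ x, x ∉ s → f x = b₀)
                ∧ ∀ b', (s.filter fun x => f x = b').card = c' b')) := by
            intro f hf
            rw [Finset.mem_filter] at hf
            obtain ⟨hfT, hfa⟩ := hf
            rw [hT, mem_filter] at hfT
            obtain ⟨-, h1, h2⟩ := hfT
            rw [mem_filter]
            refine ⟨mem_univ _, ?_, ?_⟩
            · intro x hx
              by_cases hxa : x = a
              · subst hxa; simp
              · rw [Function.update_of_ne hxa]
                exact h1 x (by simp [hxa, hx])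
            · intro b'
              have hfil : (s.filter fun x => Function.update f a b₀ x = b')
                  = s.filter fun x => f x = b' := by
                apply Finset.filter_congr
                intro x hx
                have : x ≠ a := fun h => ha (h ▸ hx)
                rw [Function.update_of_ne this]
              rw [hfil]
              have h2b := h2 b'
              by_cases hbb : b' = b
              · subst hbb
                have : (insert a s).filter (fun x => f x = b')
                    = insert a (s.filter fun x => f x = b') := by
                  rw [Finset.filter_insert, if_pos hfa]
                rw [this, Finset.card_insert_of_notMem
                  (fun h => ha (Finset.mem_of_mem_filter a h))] at h2b
                rw [hc', Function.update_self]
                omega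
              · have : (insert a s).filter (fun x => f x = b')
                    = s.filter fun x => f x = b' := by
                  rw [Finset.filter_insert, if_neg (fun h => hbb (by rw [← h, hfa]))]
                rw [this] at h2b
                rw [h2b, hc', Function.update_of_ne hbb]
          have hj : ∀ g ∈ (univ.filter (fun f : α → β => (∀ x, x ∉ s → f x = b₀)
                ∧ ∀ b', (s.filter fun x => f x = b').card = c' b')),
              Function.update g a b ∈ (T.filter fun f => f a = b) := by
            intro g hg
            rw [Finset.mem_filter] at hg
            obtain ⟨-, h1, h2⟩ := hg
            rw [Finset.mem_filter]
            refine ⟨?_, by simp⟩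
            rw [hT, Finset.mem_filter]
            refine ⟨mem_univ _, ?_, ?_⟩
            · intro x hx
              simp only [Finset.mem_insert, not_or] at hx
              rw [Function.update_of_ne hx.1]
              exact h1 x hx.2
            · intro b'
              have hfil : (s.filter fun x => Function.update g a b x = b')
                  = s.filter fun x => g x = b' := by
                apply Finset.filter_congr
                intro x hx
                have : x ≠ a := fun h => ha (h ▸ hx)
                rw [Function.update_of_ne this]
              by_cases hbb : b' = b
              · have hpos : Function.update g a b a = b' := by
                  rw [Function.update_self, hbb]
                have : (insert a s).filter (fun x => Function.update g a b x = b')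
                    = insert a (s.filter fun x => Function.update g a b x = b') := by
                  rw [Finset.filter_insert, if_pos hpos]
                rw [this, Finset.card_insert_of_notMem
                  (fun h => ha (Finset.mem_of_mem_filter a h)), hfil]
                have h2b := h2 b'
                rw [hc', hbb, Function.update_self] at h2b
                rw [hbb]
                omega
              · have : (insert a s).filter (fun x => Function.update g a b x = b')
                    = s.filter fun x => Function.update g a b x = b' := by
                  rw [Finset.filter_insert, if_neg
                    (by rw [Function.update_self]; exact fun h => hbb h.symm)]
                rw [this, hfil]
                have := h2 b'
                rwa [hc', Function.update_of_ne hbb] at this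
          have li : ∀ f ∈ (T.filter fun f => f a = b),
              Function.update (Function.update f a b₀) a b = f := by
            intro f hf
            rw [Finset.mem_filter] at hf
            funext x
            by_cases hxa : x = a
            · subst hxa; simp [hf.2]
            · simp [Function.update_of_ne hxa]
          have ri : ∀ g ∈ (univ.filter (fun f : α → β => (∀ x, x ∉ s → f x = b₀)
                ∧ ∀ b', (s.filter fun x => f x = b').card = c' b')),
              Function.update (Function.update g a b) a b₀ = g := by
            intro g hg
            rw [Finset.mem_filter] at hg
            funext x
            by_cases hxa : x = a
            · subst hxa
              simp only [Function.update_self]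
              exact (hg.2.1 x (by simpa using ha)).symm
            · simp [Function.update_of_ne hxa]
          exact Finset.card_bij' (fun f _ => Function.update f a b₀)
            (fun g _ => Function.update g a b) hi hj li ri
        have hprod : ∏ b', (c b').factorial = c b * ∏ b', (c' b').factorial := by
          have e1 : ∏ b', (c b').factorial
              = (c b).factorial * ∏ x ∈ univ.erase b, (c x).factorial :=
            (Finset.mul_prod_erase univ _ (mem_univ b)).symm
          have e2 : ∏ b', (c' b').factorial
              = (c' b).factorial * ∏ x ∈ univ.erase b, (c' x).factorial :=
            (Finset.mul_prod_erase univ _ (mem_univ b)).symm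
          have e3 : ∏ x ∈ univ.erase b, (c' x).factorial
              = ∏ x ∈ univ.erase b, (c x).factorial := by
            apply Finset.prod_congr rfl
            intro x hx
            rw [hc', Function.update_of_ne (Finset.ne_of_mem_erase hx)]
          have e4 : (c' b) = c b - 1 := by rw [hc', Function.update_self]
          have e5 : c b * (c b - 1).factorial = (c b).factorial :=
            Nat.mul_factorial_pred hcb
          rw [e1, e2, e3, e4, ← mul_assoc, e5]
        rw [key, hprod, ← mul_assoc, mul_comm _ (c b), mul_assoc, ih c' hsum']
    -- now sum over b
    have hcard : T.card = ∑ b : β, (T.filter fun f => f a = b).card :=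
      Finset.card_eq_sum_card_fiberwise (fun f _ => mem_univ (f a))
    rw [Finset.card_insert_of_notMem ha, hcard, Finset.sum_mul]
    calc ∑ b : β, (T.filter fun f => f a = b).card * ∏ b', (c b').factorial
        = ∑ b : β, c b * (s.card).factorial := by
          exact Finset.sum_congr rfl fun b _ => hfib b
      _ = (s.card + 1).factorial := by
          rw [← Finset.sum_mul, hc, Nat.factorial_succ]

lemma count_two (b₀ : β) (p : α → Prop) [DecidablePred p] (c1 c2 : β → ℕ)
    (h1 : (∑ b, c1 b) = (univ.filter p).card)
    (h2 : (∑ b, c2 b) = (univ.filter fun a => ¬ p a).card) :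
    (univ.filter (fun f : α → β => ∀ b,
        (univ.filter fun a => p a ∧ f a = b).card = c1 b
        ∧ (univ.filter fun a => ¬ p a ∧ f a = b).card = c2 b)).card
      * ((∏ b, (c1 b).factorial) * ∏ b, (c2 b).factorial)
    = ((univ.filter p).card).factorial * ((univ.filter fun a => ¬ p a).card).factorial := by
  classical
  set s₁ := univ.filter p with hs₁
  set s₂ := univ.filter (fun a => ¬ p a) with hs₂
  set C1 := univ.filter (fun f : α → β => (∀ a, a ∉ s₁ → f a = b₀)
        ∧ ∀ b, (s₁.filter fun a => f a = b).card = c1 b) with hC1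
  set C2 := univ.filter (fun f : α → β => (∀ a, a ∉ s₂ → f a = b₀)
        ∧ ∀ b, (s₂.filter fun a => f a = b).card = c2 b) with hC2
  have hcard : (univ.filter (fun f : α → β => ∀ b,
        (univ.filter fun a => p a ∧ f a = b).card = c1 b
        ∧ (univ.filter fun a => ¬ p a ∧ f a = b).card = c2 b)).card = C1.card * C2.card := by
    rw [← Finset.card_product]
    apply Finset.card_bij' (fun f _ => ((fun a => if p a then f a else b₀),
        (fun a => if p a then b₀ else f a))) (fun g _ => fun a => if p a then g.1 a else g.2 a)
    · intro f hf
      rw [mem_filter] at hf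
      obtain ⟨-, hf⟩ := hf
      rw [Finset.mem_product]
      constructor
      · rw [hC1, mem_filter]
        refine ⟨mem_univ _, fun a ha => ?_, fun b => ?_⟩
        · rw [hs₁, mem_filter] at ha
          simp only [mem_univ, true_and] at ha
          simp [ha]
        · have : (s₁.filter fun a => (if p a then f a else b₀) = b)
              = univ.filter fun a => p a ∧ f a = b := by
            rw [hs₁, Finset.filter_filter]
            apply Finset.filter_congr
            intro x _
            constructor
            · rintro ⟨hp, he⟩; rw [if_pos hp] at he; exact ⟨hp, he⟩
            · rintro ⟨hp, he⟩; exact ⟨hp, by rw [if_pos hp]; exact he⟩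
          rw [this, (hf b).1]
      · rw [hC2, mem_filter]
        refine ⟨mem_univ _, fun a ha => ?_, fun b => ?_⟩
        · rw [hs₂, mem_filter] at ha
          simp only [mem_univ, true_and, not_not] at ha
          simp [ha]
        · have : (s₂.filter fun a => (if p a then b₀ else f a) = b)
              = univ.filter fun a => ¬ p a ∧ f a = b := by
            rw [hs₂, Finset.filter_filter]
            apply Finset.filter_congr
            intro x _
            constructor
            · rintro ⟨hp, he⟩; rw [if_neg hp] at he; exact ⟨hp, he⟩
            · rintro ⟨hp, he⟩; exact ⟨hp, by rw [if_neg hp]; exact he⟩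
          rw [this, (hf b).2]
    · intro g hg
      rw [Finset.mem_product, hC1, hC2, mem_filter, mem_filter] at hg
      obtain ⟨⟨-, hg11, hg12⟩, ⟨-, hg21, hg22⟩⟩ := hg
      rw [mem_filter]
      refine ⟨mem_univ _, fun b => ⟨?_, ?_⟩⟩
      · have : (univ.filter fun a => p a ∧ (if p a then g.1 a else g.2 a) = b)
            = s₁.filter fun a => g.1 a = b := by
          rw [hs₁, Finset.filter_filter]
          apply Finset.filter_congr
          intro x _
          constructor
          · rintro ⟨hp, he⟩; rw [if_pos hp] at he; exact ⟨hp, he⟩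
          · rintro ⟨hp, he⟩; exact ⟨hp, by rw [if_pos hp]; exact he⟩
        rw [this, hg12 b]
      · have : (univ.filter fun a => ¬ p a ∧ (if p a then g.1 a else g.2 a) = b)
            = s₂.filter fun a => g.2 a = b := by
          rw [hs₂, Finset.filter_filter]
          apply Finset.filter_congr
          intro x _
          constructor
          · rintro ⟨hp, he⟩; rw [if_neg hp] at he; exact ⟨hp, he⟩
          · rintro ⟨hp, he⟩; exact ⟨hp, by rw [if_neg hp]; exact he⟩
        rw [this, hg22 b]
    · intro f hf
      funext a
      by_cases hp : p a <;> simp [hp]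
    · intro g hg
      rw [Finset.mem_product, hC1, hC2, mem_filter, mem_filter] at hg
      obtain ⟨⟨-, hg11, -⟩, ⟨-, hg21, -⟩⟩ := hg
      have e1 : ∀ a, ¬ p a → g.1 a = b₀ := by
        intro a hpa
        exact hg11 a (by rw [hs₁]; simp [hpa])
      have e2 : ∀ a, p a → g.2 a = b₀ := by
        intro a hpa
        exact hg21 a (by rw [hs₂]; simp [hpa])
      have : ∀ (x : α → β) (y : α → β), x = g.1 → y = g.2 → (x, y) = g := by
        rintro x y rfl rfl; rfl
      apply this <;> funext a <;> by_cases hp : p a <;> simp [hp]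
      · exact (e1 a hp).symm
      · exact (e2 a hp).symm
  rw [hcard]
  have k1 := count_pin b₀ s₁ c1 h1
  have k2 := count_pin b₀ s₂ c2 h2
  calc C1.card * C2.card * ((∏ b, (c1 b).factorial) * ∏ b, (c2 b).factorial)
      = (C1.card * ∏ b, (c1 b).factorial) * (C2.card * ∏ b, (c2 b).factorial) := by ring
    _ = (s₁.card).factorial * (s₂.card).factorial := by rw [← hC1] at k1; rw [← hC2] at k2; rw [k1, k2]

lemma card_filter_lt_fin (m n : ℕ) (h : n ≤ m) :
    (univ.filter fun i : Fin m => (i : ℕ) < n).card = n := by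
  have : (univ.filter fun i : Fin m => (i : ℕ) < n) = Finset.image (Fin.castLE h) univ := by
    ext i
    simp only [mem_filter, mem_univ, true_and, Finset.mem_image]
    constructor
    · intro hi; exact ⟨⟨(i : ℕ), hi⟩, Fin.ext rfl⟩
    · rintro ⟨j, rfl⟩; exact j.2
  rw [this, Finset.card_image_of_injective _ (Fin.castLE_injective h), Finset.card_univ,
    Fintype.card_fin]

lemma card_filter_not_lt_fin (m n : ℕ) (h : n ≤ m) :
    (univ.filter fun i : Fin m => ¬ ((i : ℕ) < n)).card = m - n := by
  have := Finset.card_filter_add_card_filter_not (s := (univ : Finset (Fin m)))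
    (p := fun i : Fin m => (i : ℕ) < n)
  rw [card_filter_lt_fin m n h, Finset.card_univ, Fintype.card_fin] at this
  omega

end auxx

lemma cont_zero_of_neg {F : ℝ → ℝ} (hFc : Continuous F) (h : ∀ x < 0, F x = 0) : F 0 = 0 := by
  have h1 : Filter.Tendsto F (nhdsWithin 0 (Set.Iio 0)) (nhds (F 0)) :=
    (hFc.tendsto 0).mono_left nhdsWithin_le_nhds
  have h2 : Filter.Tendsto F (nhdsWithin 0 (Set.Iio 0)) (nhds 0) := by
    apply Filter.Tendsto.congr' _ tendsto_const_nhds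
    filter_upwards [self_mem_nhdsWithin] with x hx
    exact (h x hx).symm
  exact tendsto_nhds_unique h1 h2

-- telescoping sum for monotone Fin tuples
lemma fin_telescope {e m : ℕ} (iv : Fin (e + 2) → Fin (m + 1))
    (h0 : (iv 0 : ℕ) = 0) (hlast : (iv (Fin.last (e + 1)) : ℕ) = m)
    (hmono : ∀ a : Fin (e + 1), (iv a.castSucc : ℕ) ≤ (iv a.succ : ℕ)) :
    ∑ a : Fin (e + 1), ((iv a.succ : ℕ) - (iv a.castSucc : ℕ)) = m := by
  have key : ∀ k : ℕ, ∀ hk : k ≤ e + 1,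
      ∑ a ∈ univ.filter (fun a : Fin (e+1) => (a : ℕ) < k),
        ((iv a.succ : ℕ) - (iv a.castSucc : ℕ)) = (iv ⟨k, by omega⟩ : ℕ) := by
    intro k
    induction k with
    | zero =>
      intro hk
      have e0 : (⟨0, by omega⟩ : Fin (e+2)) = 0 := by simp [Fin.ext_iff]
      rw [e0, h0]
      have : (univ.filter (fun a : Fin (e+1) => (a : ℕ) < 0)) = ∅ := by
        ext a; simp
      rw [this, Finset.sum_empty]
    | succ k ih =>
      intro hk
      have hk' : k ≤ e + 1 := by omega
      have hsplit : (univ.filter (fun a : Fin (e+1) => (a : ℕ) < k + 1))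
          = insert (⟨k, by omega⟩ : Fin (e+1)) (univ.filter (fun a : Fin (e+1) => (a : ℕ) < k)) := by
        ext a
        simp only [mem_filter, mem_univ, true_and, Finset.mem_insert, Fin.ext_iff]
        omega
      rw [hsplit, Finset.sum_insert (by simp), ih hk']
      have h1 : (⟨k, by omega⟩ : Fin (e+1)).succ = (⟨k+1, by omega⟩ : Fin (e+2)) := by
        simp [Fin.ext_iff]
      have h2 : (⟨k, by omega⟩ : Fin (e+1)).castSucc = (⟨k, by omega⟩ : Fin (e+2)) := by
        simp [Fin.ext_iff]
      rw [h1, h2]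
      have := hmono ⟨k, by omega⟩
      rw [h1, h2] at this
      omega
  have := key (e+1) (le_refl _)
  have el : (⟨e+1, by omega⟩ : Fin (e+2)) = Fin.last (e+1) := by simp [Fin.ext_iff]
  rw [el, hlast] at this
  have huniv : (univ.filter (fun a : Fin (e+1) => (a : ℕ) < e + 1)) = univ := by
    ext a; simp [a.2]; exact Nat.le_of_lt_succ a.2
  rwa [huniv] at this

set_option maxHeartbeats 4000000 in
/-- For independent `X₁, …, X_m` in `[0,1]`, where `X₁, …, X_n` have common
continuous cdf `F` and `X_{n+1}, …, X_m` have common continuous cdf `G`, with order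
statistics `Y₁ ≤ … ≤ Y_m`, indices `n₁ < … < n_e`, points `0 = y₀ ≤ y₁ ≤ … ≤ y_{e+1} = 1`,
`0 ≤ j ≤ n`, and `B` the event that exactly `j` of `X₁, …, X_n` fall in `[0, y₁]`:
`Pr({Y_{n₁} ≤ y₁} ∩ … ∩ {Y_{n_e} ≤ y_e} ∩ B)` equals the double sum over the index set
`I` and over vectors `λ` (with `λ₁ = j`, `∑ λ_a = n`, `0 ≤ λ_a ≤ i_a − i_{a−1}`) of
`n!(m−n)! ∏_a [F(y_a) − F(y_{a−1})]^{λ_a} [G(y_a) − G(y_{a−1})]^{i_a−i_{a−1}−λ_a}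
  / (λ_a! (i_a−i_{a−1}−λ_a)!)`. -/
theorem stmt1 {Ω : Type*} [MeasurableSpace Ω] (μ : Measure Ω) [IsProbabilityMeasure μ]
    (m n e : ℕ) (hnm : n ≤ m)
    (X : Fin m → Ω → ℝ) (hmeas : ∀ i, Measurable (X i))
    (hrange : ∀ i ω, X i ω ∈ Set.Icc (0 : ℝ) 1)
    (hindep : iIndepFun X μ)
    (F G : ℝ → ℝ) (hFc : Continuous F) (hGc : Continuous G)
    (hF : ∀ i : Fin m, (i : ℕ) < n → ∀ x, (μ {ω | X i ω ≤ x}).toReal = F x)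
    (hG : ∀ i : Fin m, n ≤ (i : ℕ) → ∀ x, (μ {ω | X i ω ≤ x}).toReal = G x)
    -- the order statistics: `Y · ω` is the nondecreasing rearrangement of `X · ω`
    (Y : Fin m → Ω → ℝ)
    (hY : ∀ ω, (fun k => Y k ω) = (fun i => X i ω) ∘ Tuple.sort (fun i => X i ω))
    -- the indices `n₁ < n₂ < … < n_e` (0-based: paper's `n_a` is `(ns a : ℕ) + 1`)
    (ns : Fin e → Fin m) (hns : StrictMono ns)
    (y : Fin (e + 2) → ℝ) (hy : Monotone y) (hy0 : y 0 = 0) (hy1 : y (Fin.last (e + 1)) = 1)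
    (j : ℕ) (hj : j ≤ n) :
    (μ ({ω | ∀ a : Fin e, Y (ns a) ω ≤ y a.succ.castSucc}
        ∩ {ω | (Finset.univ.filter fun i : Fin m =>
            (i : ℕ) < n ∧ X i ω ∈ Set.Icc 0 (y 1)).card = j})).toReal
      = ∑ iv ∈ Finset.univ.filter (fun iv : Fin (e + 2) → Fin (m + 1) =>
            (iv 0 : ℕ) = 0 ∧ (iv (Fin.last (e + 1)) : ℕ) = m
            ∧ (∀ a : Fin (e + 1), (iv a.castSucc : ℕ) ≤ (iv a.succ : ℕ))
            ∧ ∀ a : Fin e, (ns a : ℕ) + 1 ≤ (iv a.succ.castSucc : ℕ)),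
          ∑ lv ∈ Finset.univ.filter (fun lv : Fin (e + 1) → Fin (n + 1) =>
              (lv 0 : ℕ) = j ∧ (∑ a, (lv a : ℕ)) = n
              ∧ ∀ a : Fin (e + 1), (lv a : ℕ) ≤ (iv a.succ : ℕ) - (iv a.castSucc : ℕ)),
            (n.factorial : ℝ) * ((m - n).factorial : ℝ)
              * ∏ a : Fin (e + 1),
                  (F (y a.succ) - F (y a.castSucc)) ^ (lv a : ℕ)
                  * (G (y a.succ) - G (y a.castSucc))
                      ^ ((iv a.succ : ℕ) - (iv a.castSucc : ℕ) - (lv a : ℕ))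
                  / (((lv a : ℕ).factorial : ℝ)
                    * ((((iv a.succ : ℕ) - (iv a.castSucc : ℕ) - (lv a : ℕ)).factorial : ℝ))) := by
  classical
  -- the interval system
  set J : Fin (e+1) → Set ℝ := fun a =>
    if a = 0 then Set.Iic (y 1) else Set.Ioc (y a.castSucc) (y a.succ) with hJ
  have Jmeas : ∀ a, MeasurableSet (J a) := by
    intro a
    rw [hJ]
    dsimp only
    split_ifs
    exacts [measurableSet_Iic, measurableSet_Ioc]
  have hy0succ : ((0 : Fin (e+1)).succ) = (1 : Fin (e+2)) := by
    simp [Fin.ext_iff]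
  have hcs : ∀ a : Fin (e+1), (a.castSucc : ℕ) ≤ (a.succ : ℕ) := by
    intro a; simp
  -- the classification function g
  have hnonempty : ∀ ω i, (univ.filter (fun a : Fin (e+1) => X i ω ≤ y a.succ)).Nonempty := by
    intro ω i
    refine ⟨Fin.last e, ?_⟩
    simp only [mem_filter, mem_univ, true_and]
    have hls : (Fin.last e).succ = Fin.last (e+1) := by simp [Fin.ext_iff]
    rw [hls, hy1]
    exact (hrange i ω).2
  set g : Ω → Fin m → Fin (e+1) :=
    fun ω i => (univ.filter (fun a : Fin (e+1) => X i ω ≤ y a.succ)).min' (hnonempty ω i) with hg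
  have gle : ∀ ω i (b : Fin (e+1)), g ω i ≤ b ↔ X i ω ≤ y b.succ := by
    intro ω i b
    constructor
    · intro hle
      have hmem := Finset.min'_mem _ (hnonempty ω i)
      rw [mem_filter] at hmem
      refine le_trans hmem.2 (hy ?_)
      exact Fin.succ_le_succ_iff.mpr hle
    · intro hxb
      exact Finset.min'_le _ b (by simp [hxb])
  have gmem : ∀ ω i (a : Fin (e+1)), X i ω ∈ J a ↔ g ω i = a := by
    intro ω i a
    rw [hJ]
    dsimp only
    by_cases ha : a = 0
    · subst ha
      rw [if_pos rfl]
      have : X i ω ∈ Set.Iic (y 1) ↔ X i ω ≤ y ((0 : Fin (e+1)).succ) := by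
        rw [hy0succ]; rfl
      rw [this, ← gle]
      exact ⟨fun h => le_antisymm h (Fin.zero_le _), fun h => le_of_eq h⟩
    · rw [if_neg ha]
      have hav : 0 < (a : ℕ) := by
        rcases Nat.eq_zero_or_pos (a : ℕ) with h | h
        · exact absurd (Fin.ext h) ha
        · exact h
      set b : Fin (e+1) := ⟨(a : ℕ) - 1, by omega⟩ with hb
      have hbsucc : (b.succ : Fin (e+2)) = a.castSucc := by
        simp [hb, Fin.ext_iff]; omega
      have h1 : X i ω ≤ y a.succ ↔ g ω i ≤ a := (gle ω i a).symm
      have h2 : y a.castSucc < X i ω ↔ a ≤ g ω i := by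
        rw [← hbsucc, ← not_le, ← gle]
        rw [not_le]
        constructor
        · intro h; rw [Fin.le_def]; rw [Fin.lt_def] at h; simp [hb] at h ⊢; omega
        · intro h; rw [Fin.lt_def]; rw [Fin.le_def] at h; simp [hb] at h ⊢; omega
      constructor
      · rintro ⟨hl, hr⟩
        exact le_antisymm (h1.mp hr) (h2.mp hl)
      · intro h
        exact ⟨h2.mpr (le_of_eq h.symm), h1.mpr (le_of_eq h)⟩
  -- counts
  set c1 : (Fin m → Fin (e+1)) → Fin (e+1) → ℕ :=
    fun h a => (univ.filter fun i : Fin m => (i : ℕ) < n ∧ h i = a).card with hc1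
  set c2 : (Fin m → Fin (e+1)) → Fin (e+1) → ℕ :=
    fun h a => (univ.filter fun i : Fin m => ¬ ((i : ℕ) < n) ∧ h i = a).card with hc2
  set cle : (Fin m → Fin (e+1)) → Fin (e+1) → ℕ :=
    fun h b => (univ.filter fun i : Fin m => h i ≤ b).card with hcle
  set HA : Finset (Fin m → Fin (e+1)) :=
    univ.filter (fun h => (∀ a : Fin e, (ns a : ℕ) < cle h a.castSucc) ∧ c1 h 0 = j) with hHA
  -- event rewriting
  have hAeq : ({ω | ∀ a : Fin e, Y (ns a) ω ≤ y a.succ.castSucc}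
        ∩ {ω | (Finset.univ.filter fun i : Fin m =>
            (i : ℕ) < n ∧ X i ω ∈ Set.Icc 0 (y 1)).card = j})
      = ⋃ h ∈ HA, {ω | g ω = h} := by
    have hidx : ∀ a : Fin e, ((a.castSucc : Fin (e+1)).succ : Fin (e+2)) = a.succ.castSucc := by
      intro a; simp [Fin.ext_iff]
    have hcountA : ∀ ω (a : Fin e),
        (univ.filter fun i : Fin m => X i ω ≤ y a.succ.castSucc)
          = (univ.filter fun i : Fin m => g ω i ≤ a.castSucc) := by
      intro ω a
      apply Finset.filter_congr
      intro i _
      rw [← hidx a, ← gle]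
    have hBcount : ∀ ω,
        (univ.filter fun i : Fin m => (i : ℕ) < n ∧ X i ω ∈ Set.Icc 0 (y 1))
          = (univ.filter fun i : Fin m => (i : ℕ) < n ∧ g ω i = 0) := by
      intro ω
      apply Finset.filter_congr
      intro i _
      apply and_congr_right
      intro _
      have hIcc : X i ω ∈ Set.Icc (0:ℝ) (y 1) ↔ X i ω ∈ J 0 := by
        rw [hJ]
        dsimp only
        rw [if_pos rfl]
        simp only [Set.mem_Icc, Set.mem_Iic]
        exact ⟨fun hh => hh.2, fun hh => ⟨(hrange i ω).1, hh⟩⟩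
      rw [hIcc, gmem]
    have hcond : ∀ ω (a : Fin e),
        (Y (ns a) ω ≤ y a.succ.castSucc ↔ (ns a : ℕ) < cle (g ω) a.castSucc) := by
      intro ω a
      have hYs : Y (ns a) ω = ((fun i => X i ω) ∘ Tuple.sort (fun i => X i ω)) (ns a) :=
        congrFun (hY ω) (ns a)
      rw [hYs, sorted_le_iff, hcountA ω a]
    ext ω
    simp only [Set.mem_inter_iff, Set.mem_setOf_eq, Set.mem_iUnion, exists_prop]
    constructor
    · rintro ⟨h1, h2⟩
      refine ⟨g ω, ?_, rfl⟩
      rw [hHA, mem_filter]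
      refine ⟨mem_univ _, fun a => (hcond ω a).mp (h1 a), ?_⟩
      rw [hc1]
      dsimp only
      rw [← hBcount ω]
      exact h2
    · rintro ⟨h, hmem, hgh⟩
      rw [hHA, mem_filter] at hmem
      obtain ⟨-, hm1, hm2⟩ := hmem
      subst hgh
      refine ⟨fun a => (hcond ω a).mpr (hm1 a), ?_⟩
      rw [hBcount ω]
      exact hm2
  have hPh : ∀ h : Fin m → Fin (e+1), {ω | g ω = h} = ⋂ i, X i ⁻¹' J (h i) := by
    intro h
    ext ω
    simp only [Set.mem_setOf_eq, Set.mem_iInter, Set.mem_preimage, funext_iff]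
    constructor
    · intro hh i; exact (gmem ω i (h i)).mpr (hh i)
    · intro hh i; exact (gmem ω i (h i)).mp (hh i)
  have hmeasP : ∀ h : Fin m → Fin (e+1), MeasurableSet {ω | g ω = h} := by
    intro h
    rw [hPh h]
    exact MeasurableSet.iInter (fun i => hmeas i (Jmeas (h i)))
  have hμA : μ (⋃ h ∈ HA, {ω | g ω = h}) = ∑ h ∈ HA, μ {ω | g ω = h} := by
    apply measure_biUnion_finset _ (fun h _ => hmeasP h)
    intro h1 h1m h2 h2m hne
    simp only [Function.onFun]
    apply Set.disjoint_left.mpr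
    rintro ω hω1 hω2
    exact hne (hω1.symm.trans hω2)
  have hprodP : ∀ h : Fin m → Fin (e+1), μ {ω | g ω = h} = ∏ i, μ (X i ⁻¹' J (h i)) := by
    intro h
    rw [hPh h]
    exact hindep.meas_iInter (fun i => ⟨J (h i), Jmeas (h i), rfl⟩)
  -- real-valued probabilities
  set q : Fin m → Fin (e+1) → ℝ := fun i a => (μ (X i ⁻¹' J a)).toReal with hq
  have htoReal : (μ (⋃ h ∈ HA, {ω | g ω = h})).toReal = ∑ h ∈ HA, ∏ i, q i (h i) := by
    rw [hμA, ENNReal.toReal_sum (fun h _ => measure_ne_top μ _)]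
    apply Finset.sum_congr rfl
    intro h _
    rw [hprodP h, ENNReal.toReal_prod]
  -- identification of q with F and G increments
  set Fd : Fin (e+1) → ℝ := fun a => F (y a.succ) - F (y a.castSucc) with hFd
  set Gd : Fin (e+1) → ℝ := fun a => G (y a.succ) - G (y a.castSucc) with hGd
  have hqF : ∀ i : Fin m, (i : ℕ) < n → ∀ a, q i a = Fd a := by
    intro i hi a
    have hF0 : F 0 = 0 := by
      apply cont_zero_of_neg hFc
      intro x hx
      rw [← hF i hi x]
      have hempty : {ω | X i ω ≤ x} = ∅ := by
        ext ω
        simp only [Set.mem_setOf_eq, Set.mem_empty_iff_false, iff_false, not_le]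
        exact lt_of_lt_of_le hx (hrange i ω).1
      rw [hempty]
      simp
    rw [hq, hFd]
    dsimp only
    by_cases ha : a = 0
    · subst ha
      rw [hJ]
      dsimp only
      rw [if_pos rfl]
      have hpre : X i ⁻¹' Set.Iic (y 1) = {ω | X i ω ≤ y 1} := rfl
      rw [hpre, hF i hi (y 1), Fin.castSucc_zero, hy0, hF0, hy0succ, sub_zero]
    · rw [hJ]
      dsimp only
      rw [if_neg ha]
      have hyle : y a.castSucc ≤ y a.succ := hy (by rw [Fin.le_def]; exact hcs a)
      have hsub : X i ⁻¹' Set.Ioc (y a.castSucc) (y a.succ)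
          = {ω | X i ω ≤ y a.succ} \ {ω | X i ω ≤ y a.castSucc} := by
        ext ω
        simp only [Set.mem_preimage, Set.mem_Ioc, Set.mem_diff, Set.mem_setOf_eq]
        constructor
        · rintro ⟨hl, hr⟩; exact ⟨hr, not_le.mpr hl⟩
        · rintro ⟨hl, hr⟩; exact ⟨not_le.mp hr, hl⟩
      have hss : {ω | X i ω ≤ y a.castSucc} ⊆ {ω | X i ω ≤ y a.succ} :=
        fun ω hω => le_trans hω hyle
      have hnm2 : NullMeasurableSet {ω | X i ω ≤ y a.castSucc} μ :=
        (hmeas i measurableSet_Iic).nullMeasurableSet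
      rw [hsub, measure_diff hss hnm2 (measure_ne_top μ _),
        ENNReal.toReal_sub_of_le (measure_mono hss) (measure_ne_top μ _),
        hF i hi, hF i hi]
  have hqG : ∀ i : Fin m, ¬ ((i : ℕ) < n) → ∀ a, q i a = Gd a := by
    intro i hi a
    have hG0 : G 0 = 0 := by
      apply cont_zero_of_neg hGc
      intro x hx
      rw [← hG i (not_lt.mp hi) x]
      have hempty : {ω | X i ω ≤ x} = ∅ := by
        ext ω
        simp only [Set.mem_setOf_eq, Set.mem_empty_iff_false, iff_false, not_le]
        exact lt_of_lt_of_le hx (hrange i ω).1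
      rw [hempty]
      simp
    rw [hq, hGd]
    dsimp only
    by_cases ha : a = 0
    · subst ha
      rw [hJ]
      dsimp only
      rw [if_pos rfl]
      have hpre : X i ⁻¹' Set.Iic (y 1) = {ω | X i ω ≤ y 1} := rfl
      rw [hpre, hG i (not_lt.mp hi) (y 1), Fin.castSucc_zero, hy0, hG0, hy0succ, sub_zero]
    · rw [hJ]
      dsimp only
      rw [if_neg ha]
      have hyle : y a.castSucc ≤ y a.succ := hy (by rw [Fin.le_def]; exact hcs a)
      have hsub : X i ⁻¹' Set.Ioc (y a.castSucc) (y a.succ)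
          = {ω | X i ω ≤ y a.succ} \ {ω | X i ω ≤ y a.castSucc} := by
        ext ω
        simp only [Set.mem_preimage, Set.mem_Ioc, Set.mem_diff, Set.mem_setOf_eq]
        constructor
        · rintro ⟨hl, hr⟩; exact ⟨hr, not_le.mpr hl⟩
        · rintro ⟨hl, hr⟩; exact ⟨not_le.mp hr, hl⟩
      have hss : {ω | X i ω ≤ y a.castSucc} ⊆ {ω | X i ω ≤ y a.succ} :=
        fun ω hω => le_trans hω hyle
      have hnm2 : NullMeasurableSet {ω | X i ω ≤ y a.castSucc} μ :=
        (hmeas i measurableSet_Iic).nullMeasurableSet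
      rw [hsub, measure_diff hss hnm2 (measure_ne_top μ _),
        ENNReal.toReal_sub_of_le (measure_mono hss) (measure_ne_top μ _),
        hG i (not_lt.mp hi), hG i (not_lt.mp hi)]
  -- per-function product formula
  have whq : ∀ h : Fin m → Fin (e+1),
      ∏ i, q i (h i) = (∏ a, Fd a ^ c1 h a) * ∏ a, Gd a ^ c2 h a := by
    intro h
    rw [← Finset.prod_filter_mul_prod_filter_not univ (fun i : Fin m => (i : ℕ) < n)
      (fun i => q i (h i))]
    congr 1
    · rw [Finset.prod_congr rfl (fun i hi => hqF i (mem_filter.mp hi).2 (h i)),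
        ← Finset.prod_fiberwise_of_maps_to (fun (i : Fin m) _ => mem_univ (h i))
          (fun i => Fd (h i))]
      apply Finset.prod_congr rfl
      intro a _
      rw [Finset.prod_congr rfl (fun i hi => by rw [(mem_filter.mp hi).2] :
        ∀ i ∈ (univ.filter fun i : Fin m => (i : ℕ) < n).filter (fun i => h i = a),
          Fd (h i) = Fd a), Finset.prod_const, Finset.filter_filter]
    · rw [Finset.prod_congr rfl (fun i hi => hqG i (mem_filter.mp hi).2 (h i)),
        ← Finset.prod_fiberwise_of_maps_to (fun (i : Fin m) _ => mem_univ (h i))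
          (fun i => Gd (h i))]
      apply Finset.prod_congr rfl
      intro a _
      rw [Finset.prod_congr rfl (fun i hi => by rw [(mem_filter.mp hi).2] :
        ∀ i ∈ (univ.filter fun i : Fin m => ¬ ((i : ℕ) < n)).filter (fun i => h i = a),
          Gd (h i) = Gd a), Finset.prod_const, Finset.filter_filter]
  -- the statistics maps
  have hc1len : ∀ (h : Fin m → Fin (e+1)) a, c1 h a ≤ n := by
    intro h a
    rw [hc1]
    calc (univ.filter fun i : Fin m => (i : ℕ) < n ∧ h i = a).card
        ≤ (univ.filter fun i : Fin m => (i : ℕ) < n).card := by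
          apply Finset.card_le_card
          intro i hi
          rw [mem_filter] at hi ⊢
          exact ⟨hi.1, hi.2.1⟩
      _ = n := card_filter_lt_fin m n hnm
  set Φiv : (Fin m → Fin (e+1)) → Fin (e+2) → Fin (m+1) :=
    fun h a => ⟨(univ.filter fun i : Fin m => (h i : ℕ) < (a : ℕ)).card,
      by exact Nat.lt_succ_of_le ((Finset.card_filter_le _ _).trans (by simp))⟩ with hΦiv
  set Φlv : (Fin m → Fin (e+1)) → Fin (e+1) → Fin (n+1) :=
    fun h a => ⟨c1 h a, Nat.lt_succ_of_le (hc1len h a)⟩ with hΦlv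
  -- count facts
  have f1 : ∀ h, (Φiv h 0 : ℕ) = 0 := by
    intro h
    rw [hΦiv]
    dsimp only
    rw [Finset.card_eq_zero, Finset.filter_eq_empty_iff]
    intro i _
    rw [Fin.val_zero]
    exact Nat.not_lt_zero _
  have f2 : ∀ h, (Φiv h (Fin.last (e+1)) : ℕ) = m := by
    intro h
    rw [hΦiv]
    dsimp only
    rw [Finset.filter_true_of_mem (fun i _ => by simpa using (h i).isLt), Finset.card_univ,
      Fintype.card_fin]
  have f3 : ∀ h (b : Fin (e+1)), (Φiv h b.succ : ℕ) = cle h b := by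
    intro h b
    rw [hΦiv, hcle]
    dsimp only
    congr 1
    apply Finset.filter_congr
    intro i _
    rw [Fin.le_def, Fin.val_succ]
    omega
  have f4 : ∀ h (a : Fin (e+1)), (Φiv h a.castSucc : ℕ) ≤ (Φiv h a.succ : ℕ) := by
    intro h a
    rw [hΦiv]
    dsimp only
    apply Finset.card_le_card
    intro i hi
    rw [mem_filter] at hi ⊢
    refine ⟨hi.1, lt_of_lt_of_le hi.2 ?_⟩
    rw [Fin.coe_castSucc, Fin.val_succ]
    omega
  have f5 : ∀ h (a : Fin (e+1)),
      (Φiv h a.castSucc : ℕ) + (c1 h a + c2 h a) = (Φiv h a.succ : ℕ) := by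
    intro h a
    have hsplit : (univ.filter fun i : Fin m => (h i : ℕ) < (a.succ : ℕ))
        = (univ.filter fun i : Fin m => (h i : ℕ) < (a.castSucc : ℕ))
          ∪ (univ.filter fun i : Fin m => h i = a) := by
      rw [← Finset.filter_or]
      apply Finset.filter_congr
      intro i _
      rw [Fin.val_succ, Fin.coe_castSucc, Fin.ext_iff]
      have := (h i).isLt
      omega
    have hdisj2 : Disjoint (univ.filter fun i : Fin m => (h i : ℕ) < (a.castSucc : ℕ))
        (univ.filter fun i : Fin m => h i = a) := by
      rw [Finset.disjoint_left]
      intro i hi1 hi2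
      rw [mem_filter] at hi1 hi2
      rw [hi2.2] at hi1
      simp at hi1
    have hcnt : (univ.filter fun i : Fin m => h i = a).card = c1 h a + c2 h a := by
      have := Finset.card_filter_add_card_filter_not
        (s := univ.filter fun i : Fin m => h i = a) (p := fun i => (i : ℕ) < n)
      rw [Finset.filter_filter, Finset.filter_filter] at this
      rw [hc1, hc2]
      dsimp only
      rw [show (univ.filter fun i : Fin m => (i : ℕ) < n ∧ h i = a)
          = univ.filter fun i : Fin m => h i = a ∧ (i : ℕ) < n by
        apply Finset.filter_congr; intro i _; simp [and_comm],
        show (univ.filter fun i : Fin m => ¬ ((i : ℕ) < n) ∧ h i = a)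
          = univ.filter fun i : Fin m => h i = a ∧ ¬ ((i : ℕ) < n) by
        apply Finset.filter_congr; intro i _; simp [and_comm]]
      exact this.symm
    rw [hΦiv]
    dsimp only
    rw [hsplit, Finset.card_union_of_disjoint hdisj2, hcnt]
  have f6 : ∀ h, ∑ a, c1 h a = n := by
    intro h
    have hfib := Finset.card_eq_sum_card_fiberwise
      (s := univ.filter fun i : Fin m => (i : ℕ) < n) (t := univ) (f := h)
      (fun i _ => mem_univ (h i))
    rw [card_filter_lt_fin m n hnm] at hfib
    have hgoal : ∑ a, c1 h a = ∑ b : Fin (e+1),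
        ((univ.filter fun i : Fin m => (i : ℕ) < n).filter fun i => h i = b).card := by
      apply Finset.sum_congr rfl
      intro a _
      rw [hc1]
      dsimp only
      rw [Finset.filter_filter]
    rw [hgoal]
    exact hfib.symm
  have f7 : ∀ h, ∑ a, c2 h a = m - n := by
    intro h
    have hfib := Finset.card_eq_sum_card_fiberwise
      (s := univ.filter fun i : Fin m => ¬ ((i : ℕ) < n)) (t := univ) (f := h)
      (fun i _ => mem_univ (h i))
    rw [card_filter_not_lt_fin m n hnm] at hfib
    have hgoal : ∑ a, c2 h a = ∑ b : Fin (e+1),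
        ((univ.filter fun i : Fin m => ¬ ((i : ℕ) < n)).filter fun i => h i = b).card := by
      apply Finset.sum_congr rfl
      intro a _
      rw [hc2]
      dsimp only
      rw [Finset.filter_filter]
    rw [hgoal]
    exact hfib.symm
  -- fiber characterization
  have fibchar : ∀ (iv : Fin (e+2) → Fin (m+1)) (lv : Fin (e+1) → Fin (n+1)),
      (iv 0 : ℕ) = 0 →
      (∀ a : Fin (e+1), (iv a.castSucc : ℕ) ≤ (iv a.succ : ℕ)) →
      (∀ a : Fin (e+1), (lv a : ℕ) ≤ (iv a.succ : ℕ) - (iv a.castSucc : ℕ)) →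
      ∀ h : Fin m → Fin (e+1),
        ((Φiv h = iv ∧ Φlv h = lv) ↔
          ∀ a : Fin (e+1), c1 h a = (lv a : ℕ)
            ∧ c2 h a = (iv a.succ : ℕ) - (iv a.castSucc : ℕ) - (lv a : ℕ)) := by
    intro iv lv h0 hmono hle h
    constructor
    · rintro ⟨hiv, hlv⟩ a
      have e1 : c1 h a = (lv a : ℕ) := by
        rw [← hlv]
      have e5 := f5 h a
      rw [hiv] at e5
      have := hle a
      have := hmono a
      exact ⟨e1, by omega⟩
    · intro hc
      have hlv' : Φlv h = lv := by
        funext a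
        exact Fin.ext ((hc a).1)
      refine ⟨?_, hlv'⟩
      funext a
      apply Fin.ext
      induction a using Fin.induction with
      | zero =>
        have := f1 h
        omega
      | succ a ih =>
        have e5 := f5 h a
        have h1 := (hc a).1
        have h2 := (hc a).2
        have h3 := hle a
        have h4 := hmono a
        omega
  have hidx2 : ∀ a : Fin e, ((a.castSucc : Fin (e+1)).succ : Fin (e+2)) = a.succ.castSucc := by
    intro a; simp [Fin.ext_iff]
  -- the key per-pair computation
  have key : ∀ (iv : Fin (e+2) → Fin (m+1)) (lv : Fin (e+1) → Fin (n+1)),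
      (iv 0 : ℕ) = 0 → (iv (Fin.last (e+1)) : ℕ) = m →
      (∀ a : Fin (e+1), (iv a.castSucc : ℕ) ≤ (iv a.succ : ℕ)) →
      (∑ a, (lv a : ℕ)) = n →
      (∀ a : Fin (e+1), (lv a : ℕ) ≤ (iv a.succ : ℕ) - (iv a.castSucc : ℕ)) →
      ∑ h ∈ univ.filter (fun h : Fin m → Fin (e+1) => Φiv h = iv ∧ Φlv h = lv),
          ∏ i, q i (h i)
        = (n.factorial : ℝ) * ((m - n).factorial : ℝ)
            * ∏ a : Fin (e+1),
                Fd a ^ (lv a : ℕ)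
                * Gd a ^ ((iv a.succ : ℕ) - (iv a.castSucc : ℕ) - (lv a : ℕ))
                / (((lv a : ℕ).factorial : ℝ)
                  * ((((iv a.succ : ℕ) - (iv a.castSucc : ℕ) - (lv a : ℕ)).factorial : ℝ))) := by
    intro iv lv h0 hlast hmono hsum hle
    have hCNT : univ.filter (fun h : Fin m → Fin (e+1) => Φiv h = iv ∧ Φlv h = lv)
        = univ.filter (fun f : Fin m → Fin (e+1) => ∀ b : Fin (e+1),
            (univ.filter fun i : Fin m => (i : ℕ) < n ∧ f i = b).card = (lv b : ℕ)
            ∧ (univ.filter fun i : Fin m => ¬ ((i : ℕ) < n) ∧ f i = b).card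
                = (iv b.succ : ℕ) - (iv b.castSucc : ℕ) - (lv b : ℕ)) := by
      apply Finset.filter_congr
      intro h _
      exact fibchar iv lv h0 hmono hle h
    have hval : ∀ h ∈ univ.filter (fun h : Fin m → Fin (e+1) => Φiv h = iv ∧ Φlv h = lv),
        ∏ i, q i (h i)
          = (∏ a, Fd a ^ (lv a : ℕ))
            * ∏ a, Gd a ^ ((iv a.succ : ℕ) - (iv a.castSucc : ℕ) - (lv a : ℕ)) := by
      intro h hh
      rw [mem_filter] at hh
      have hc := (fibchar iv lv h0 hmono hle h).mp hh.2
      rw [whq h]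
      congr 1
      · exact Finset.prod_congr rfl (fun a _ => by rw [(hc a).1])
      · exact Finset.prod_congr rfl (fun a _ => by rw [(hc a).2])
    rw [Finset.sum_congr rfl hval, Finset.sum_const, hCNT, nsmul_eq_mul]
    -- the count
    have h1' : (∑ b, (lv b : ℕ)) = (univ.filter fun i : Fin m => (i : ℕ) < n).card := by
      rw [card_filter_lt_fin m n hnm]; exact hsum
    have hdsum : (∑ a : Fin (e+1), ((iv a.succ : ℕ) - (iv a.castSucc : ℕ))) = m :=
      fin_telescope iv h0 hlast hmono
    have h2' : (∑ b, ((iv b.succ : ℕ) - (iv b.castSucc : ℕ) - (lv b : ℕ)))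
        = (univ.filter fun i : Fin m => ¬ ((i : ℕ) < n)).card := by
      rw [card_filter_not_lt_fin m n hnm,
        Finset.sum_tsub_distrib univ (fun b _ => hle b), hdsum, hsum]
    have hcount := count_two (α := Fin m) (β := Fin (e+1)) 0
      (fun i : Fin m => (i : ℕ) < n) (fun b => (lv b : ℕ))
      (fun b => (iv b.succ : ℕ) - (iv b.castSucc : ℕ) - (lv b : ℕ)) h1' h2'
    rw [card_filter_lt_fin m n hnm, card_filter_not_lt_fin m n hnm] at hcount
    have hcr : ((univ.filter (fun f : Fin m → Fin (e+1) => ∀ b : Fin (e+1),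
            (univ.filter fun i : Fin m => (i : ℕ) < n ∧ f i = b).card = (lv b : ℕ)
            ∧ (univ.filter fun i : Fin m => ¬ ((i : ℕ) < n) ∧ f i = b).card
                = (iv b.succ : ℕ) - (iv b.castSucc : ℕ) - (lv b : ℕ))).card : ℝ)
          * ((∏ b, (((lv b : ℕ).factorial : ℝ)))
            * ∏ b, ((((iv b.succ : ℕ) - (iv b.castSucc : ℕ) - (lv b : ℕ)).factorial : ℝ)))
        = (n.factorial : ℝ) * ((m - n).factorial : ℝ) := by
      have := congrArg (fun k : ℕ => (k : ℝ)) hcount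
      push_cast at this
      convert this using 2
      congr 1
      congr 1
      ext f
      simp only [Finset.mem_filter]
    have hne1 : (∏ b, (((lv b : ℕ).factorial : ℝ))) ≠ 0 :=
      Finset.prod_ne_zero_iff.mpr (fun b _ => Nat.cast_ne_zero.mpr (Nat.factorial_ne_zero _))
    have hne2 : (∏ b, ((((iv b.succ : ℕ) - (iv b.castSucc : ℕ) - (lv b : ℕ)).factorial : ℝ)))
        ≠ 0 :=
      Finset.prod_ne_zero_iff.mpr (fun b _ => Nat.cast_ne_zero.mpr (Nat.factorial_ne_zero _))
    rw [Finset.prod_div_distrib, Finset.prod_mul_distrib, Finset.prod_mul_distrib, ← hcr]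
    field_simp
  -- maps-to facts
  have hmaps1 : ∀ h ∈ HA, Φiv h ∈ Finset.univ.filter (fun iv : Fin (e + 2) → Fin (m + 1) =>
      (iv 0 : ℕ) = 0 ∧ (iv (Fin.last (e + 1)) : ℕ) = m
      ∧ (∀ a : Fin (e + 1), (iv a.castSucc : ℕ) ≤ (iv a.succ : ℕ))
      ∧ ∀ a : Fin e, (ns a : ℕ) + 1 ≤ (iv a.succ.castSucc : ℕ)) := by
    intro h hh
    rw [hHA, mem_filter] at hh
    obtain ⟨-, hns', hj'⟩ := hh
    rw [mem_filter]
    refine ⟨mem_univ _, f1 h, f2 h, f4 h, ?_⟩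
    intro a
    have := hns' a
    rw [← hidx2 a, f3 h a.castSucc]
    omega
  have hmaps2 : ∀ (iv : Fin (e+2) → Fin (m+1)), ∀ h ∈ HA.filter (fun h => Φiv h = iv),
      Φlv h ∈ Finset.univ.filter (fun lv : Fin (e + 1) → Fin (n + 1) =>
        (lv 0 : ℕ) = j ∧ (∑ a, (lv a : ℕ)) = n
        ∧ ∀ a : Fin (e + 1), (lv a : ℕ) ≤ (iv a.succ : ℕ) - (iv a.castSucc : ℕ)) := by
    intro iv h hh
    rw [mem_filter, hHA, mem_filter] at hh
    obtain ⟨⟨-, hns', hj'⟩, hiv⟩ := hh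
    rw [mem_filter]
    refine ⟨mem_univ _, hj', ?_, ?_⟩
    · rw [show (∑ a, ((Φlv h a : ℕ))) = ∑ a, c1 h a from rfl]
      exact f6 h
    · intro a
      have e5 := f5 h a
      rw [hiv] at e5
      show c1 h a ≤ _
      omega
  have hfib2 : ∀ (iv : Fin (e+2) → Fin (m+1)) (lv : Fin (e+1) → Fin (n+1)),
      ((iv 0 : ℕ) = 0 ∧ (iv (Fin.last (e + 1)) : ℕ) = m
        ∧ (∀ a : Fin (e + 1), (iv a.castSucc : ℕ) ≤ (iv a.succ : ℕ))
        ∧ ∀ a : Fin e, (ns a : ℕ) + 1 ≤ (iv a.succ.castSucc : ℕ)) →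
      ((lv 0 : ℕ) = j ∧ (∑ a, (lv a : ℕ)) = n
        ∧ ∀ a : Fin (e + 1), (lv a : ℕ) ≤ (iv a.succ : ℕ) - (iv a.castSucc : ℕ)) →
      (HA.filter (fun h => Φiv h = iv)).filter (fun h => Φlv h = lv)
        = univ.filter (fun h : Fin m → Fin (e+1) => Φiv h = iv ∧ Φlv h = lv) := by
    intro iv lv hivc hlvc
    rw [Finset.filter_filter, hHA, Finset.filter_filter]
    apply Finset.filter_congr
    intro h _
    constructor
    · rintro ⟨-, h1, h2⟩
      exact ⟨h1, h2⟩
    · rintro ⟨h1, h2⟩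
      refine ⟨⟨?_, ?_⟩, h1, h2⟩
      · intro a
        have := hivc.2.2.2 a
        rw [← f3 h a.castSucc, hidx2 a, h1]
        omega
      · have : c1 h 0 = (lv 0 : ℕ) := by rw [← h2]
        rw [this, hlvc.1]
  -- put everything together
  rw [hAeq, htoReal]
  refine Eq.trans (Finset.sum_fiberwise_of_maps_to hmaps1 (fun h => ∏ i, q i (h i))).symm ?_
  apply Finset.sum_congr rfl
  intro iv hiv
  rw [mem_filter] at hiv
  obtain ⟨-, hiv0, hivlast, hivmono, hivns⟩ := hiv
  refine Eq.trans (Finset.sum_fiberwise_of_maps_to (hmaps2 iv)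
    (fun h => ∏ i, q i (h i))).symm ?_
  apply Finset.sum_congr rfl
  intro lv hlv
  rw [mem_filter] at hlv
  obtain ⟨-, hlv0, hlvsum, hlvle⟩ := hlv
  rw [hfib2 iv lv ⟨hiv0, hivlast, hivmono, hivns⟩ ⟨hlv0, hlvsum, hlvle⟩]
  exact key iv lv hiv0 hivlast hivmono hlvsum hlvle
end

section
/- Let X₁,…,X_m be independent real‑valued random variables with values in [0,1] such that X₁,…,X_n all have the common continuous cumulative distribution function F and X_{n+1},…,X_m all have the common continuous cumulative distribution function G. Fix points 0 = y₀ ≤ y₁ ≤ … ≤ y_e ≤ y_{e+1} = 1 and nonnegative integer vectors (i₀,…,i_{e+1}) with 0 = i₀ ≤ i₁ ≤ … ≤ i_{e+1} = m and (λ₁,…,λ_{e+1}) with λ₁ + … + λ_{e+1} = n and 0 ≤ λ_a ≤ i_a − i_{a−1} for each a. Let A_{i,λ} be the event that, for every a = 1,…,e+1, exactly i_a − i_{a−1} of the random variables X₁,…,X_m take values in the interval (y_{a−1}, y_a], and exactly λ_a of those belong to {X₁,…,X_n}. Then Pr(A_{i,λ}) = n!(m−n)! · ∏_{a=1}^{e+1}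 [F(y_a) − F(y_{a−1})]^{λ_a} [G(y_a) − G(y_{a−1})]^{i_a − i_{a−1} − λ_a} / ( λ_a! (i_a − i_{a−1} − λ_a)! ). -/
open Finset MeasureTheory ProbabilityTheory



lemma card_filter_subtype_eq {α : Type*} [Fintype α] (r : α → Prop)
    [Fintype {x // r x}]
    (p : {x // r x} → Prop) [DecidablePred p] (q : α → Prop) [DecidablePred q]
    (h1 : ∀ x : {x // r x}, p x ↔ q ↑x) (h2 : ∀ x, q x → r x) :
    (Finset.univ.filter p).card = (Finset.univ.filter q).card := by
  refine Finset.card_nbij (fun x => ↑x) ?_ ?_ ?_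
  · intro x hx
    simp only [Finset.mem_coe, Finset.mem_filter, Finset.mem_univ, true_and] at hx ⊢
    exact (h1 x).mp hx
  · intro x _ y _ hxy
    exact Subtype.ext hxy
  · intro x hx
    simp only [Finset.mem_coe, Finset.mem_filter, Finset.mem_univ, true_and] at hx
    refine ⟨⟨x, h2 x hx⟩, ?_, rfl⟩
    simp only [Finset.mem_coe, Finset.mem_filter, Finset.mem_univ, true_and]
    exact (h1 _).mpr hx

section StepEquiv

variable {α : Type} [Fintype α] [DecidableEq α] {e : ℕ} (c : Fin (e + 1) → ℕ) (s : Finset α)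

private lemma ne_last_of {f : α → Fin (e + 1)}
    (hfs : (Finset.univ.filter fun i => f i = Fin.last e) = s) (x : {x // x ∈ sᶜ}) :
    f ↑x ≠ Fin.last e := by
  intro h
  have hm : (↑x : α) ∈ Finset.univ.filter fun i => f i = Fin.last e :=
    Finset.mem_filter.mpr ⟨Finset.mem_univ _, h⟩
  rw [hfs] at hm
  exact Finset.mem_compl.mp x.2 hm

private def stepEquiv (hsc : s.card = c (Fin.last e)) :
    {f : α → Fin (e + 1) //
        (∀ b, (Finset.univ.filter fun i => f i = b).card = c b) ∧
        (Finset.univ.filter fun i => f i = Fin.last e) = s}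
      ≃ {g : {x // x ∈ sᶜ} → Fin e //
        ∀ b, (Finset.univ.filter fun i => g i = b).card = c b.castSucc} where
  toFun fp := ⟨fun x => (fp.1 ↑x).castPred (ne_last_of s fp.2.2 x), by
    intro b
    refine (card_filter_subtype_eq (fun x => x ∈ sᶜ) _
      (fun x => fp.1 x = b.castSucc) ?_ ?_).trans (fp.2.1 b.castSucc)
    · intro x
      show (fp.1 ↑x).castPred (ne_last_of s fp.2.2 x) = b ↔ fp.1 ↑x = b.castSucc
      constructor
      · intro hxx; rw [← hxx, Fin.castSucc_castPred]
      · intro hxx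
        apply Fin.castSucc_injective
        rw [Fin.castSucc_castPred, hxx]
    · intro x hx
      rw [Finset.mem_compl]
      intro hxs
      have h1 : fp.1 x = Fin.last e := (Finset.mem_filter.mp (fp.2.2 ▸ hxs : x ∈ _)).2
      rw [hx] at h1
      exact absurd h1 (Fin.castSucc_lt_last b).ne⟩
  invFun gp := ⟨fun x => if hx : x ∈ s then Fin.last e
      else ((gp.1 ⟨x, Finset.mem_compl.mpr hx⟩).castSucc), by
    have hφ : (Finset.univ.filter fun x : α =>
        (if hx : x ∈ s then Fin.last e
          else ((gp.1 ⟨x, Finset.mem_compl.mpr hx⟩).castSucc)) = Fin.last e) = s := by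
      ext x
      simp only [Finset.mem_filter, Finset.mem_univ, true_and]
      by_cases hx : x ∈ s
      · simp [hx]
      · rw [dif_neg hx]
        exact ⟨fun hc => absurd hc (Fin.castSucc_lt_last _).ne, fun hc => (hx hc).elim⟩
    refine ⟨fun b => ?_, hφ⟩
    refine Fin.lastCases ?_ (fun b' => ?_) b
    · rw [hφ]; exact hsc
    · refine ((card_filter_subtype_eq (fun x => x ∈ sᶜ) (fun x => gp.1 x = b')
        (fun x => (if hx : x ∈ s then Fin.last e
          else ((gp.1 ⟨x, Finset.mem_compl.mpr hx⟩).castSucc)) = b'.castSucc)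
        ?_ ?_).symm).trans (gp.2 b')
      · intro x
        have hx : ↑x ∉ s := Finset.mem_compl.mp x.2
        show gp.1 x = b' ↔ (if hx : ↑x ∈ s then Fin.last e
          else ((gp.1 ⟨↑x, Finset.mem_compl.mpr hx⟩).castSucc)) = b'.castSucc
        rw [dif_neg hx, Subtype.coe_eta, Fin.castSucc_inj]
      · intro x hx
        rw [Finset.mem_compl]
        intro hxs
        rw [dif_pos hxs] at hx
        exact absurd hx.symm (Fin.castSucc_lt_last b').ne⟩
  left_inv fp := by
    apply Subtype.ext
    funext x
    show (if hx : x ∈ s then Fin.last e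
      else (((fp.1 ↑(⟨x, Finset.mem_compl.mpr hx⟩ : {x // x ∈ sᶜ})).castPred
        (ne_last_of s fp.2.2 _)).castSucc)) = fp.1 x
    by_cases hx : x ∈ s
    · rw [dif_pos hx]
      exact ((Finset.mem_filter.mp (fp.2.2 ▸ hx : x ∈ _)).2).symm
    · rw [dif_neg hx, Fin.castSucc_castPred]
  right_inv gp := by
    apply Subtype.ext
    funext x
    have hx : ↑x ∉ s := Finset.mem_compl.mp x.2
    apply Fin.castSucc_injective
    rw [Fin.castSucc_castPred]
    show (if hx : (↑x : α) ∈ s then Fin.last e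
        else ((gp.1 ⟨↑x, Finset.mem_compl.mpr hx⟩).castSucc)) = (gp.1 x).castSucc
    rw [dif_neg hx, Subtype.coe_eta]

end StepEquiv

lemma count_aux : ∀ (e : ℕ) (α : Type) [Fintype α] [DecidableEq α] (c : Fin e → ℕ),
    (∑ b, c b = Fintype.card α) →
    (Finset.univ.filter fun f : α → Fin e =>
        ∀ b, (Finset.univ.filter fun i => f i = b).card = c b).card
      * ∏ b, (c b).factorial = (Fintype.card α).factorial := by
  intro e
  induction e with
  | zero =>
    intro α _ _ c h
    simp only [Finset.univ_eq_empty, Finset.sum_empty] at h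
    haveI : IsEmpty α := Fintype.card_eq_zero_iff.mp h.symm
    rw [Finset.filter_true_of_mem (fun f _ b => b.elim0)]
    simp [← h]
  | succ e ih =>
    intro α _ _ c h
    classical
    have hcL : c (Fin.last e) ≤ Fintype.card α := by
      rw [← h]
      exact Finset.single_le_sum (f := c) (fun _ _ => Nat.zero_le _) (Finset.mem_univ _)
    have hmaps : ∀ f ∈ (Finset.univ.filter fun f : α → Fin (e + 1) =>
          ∀ b, (Finset.univ.filter fun i => f i = b).card = c b),
        (Finset.univ.filter fun i => f i = Fin.last e) ∈
        Finset.powersetCard (c (Fin.last e)) (Finset.univ : Finset α) := by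
      intro f hf
      rw [Finset.mem_powersetCard]
      exact ⟨Finset.subset_univ _, (Finset.mem_filter.mp hf).2 (Fin.last e)⟩
    have hcard := Finset.card_eq_sum_card_fiberwise hmaps
    have hfib : ∀ s ∈ Finset.powersetCard (c (Fin.last e)) (Finset.univ : Finset α),
        ((Finset.univ.filter fun f : α → Fin (e + 1) =>
            ∀ b, (Finset.univ.filter fun i => f i = b).card = c b).filter
          fun f => (Finset.univ.filter fun i => f i = Fin.last e) = s).card
          * ∏ b : Fin e, (c b.castSucc).factorial
          = (Fintype.card α - c (Fin.last e)).factorial := by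
      intro s hs
      obtain ⟨-, hsc⟩ := Finset.mem_powersetCard.mp hs
      have hcompl : Fintype.card {x // x ∈ sᶜ} = Fintype.card α - c (Fin.last e) := by
        simp [Finset.card_compl, hsc]
      have hsum : ∑ b : Fin e, c b.castSucc = Fintype.card {x // x ∈ sᶜ} := by
        rw [hcompl]
        have h2 : ∑ b : Fin e, c b.castSucc + c (Fin.last e) = Fintype.card α := by
          rw [← Fin.sum_univ_castSucc]; exact h
        exact Nat.eq_sub_of_add_eq h2
      have key := ih {x // x ∈ sᶜ} (fun b => c b.castSucc) hsum
      calc ((Finset.univ.filter fun f : α → Fin (e + 1) =>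
            ∀ b, (Finset.univ.filter fun i => f i = b).card = c b).filter
          fun f => (Finset.univ.filter fun i => f i = Fin.last e) = s).card
          * ∏ b : Fin e, (c b.castSucc).factorial
          = (Finset.univ.filter fun g : {x // x ∈ sᶜ} → Fin e =>
              ∀ b, (Finset.univ.filter fun i => g i = b).card = c b.castSucc).card
            * ∏ b : Fin e, (c b.castSucc).factorial := by
            congr 1
            rw [Finset.filter_filter]
            refine Finset.card_bij'
              (fun f hf => ((stepEquiv c s hsc) ⟨f, (Finset.mem_filter.mp hf).2⟩).1)
              (fun g hg => ((stepEquiv c s hsc).symm ⟨g, (Finset.mem_filter.mp hg).2⟩).1)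
              (fun f hf => Finset.mem_filter.mpr ⟨Finset.mem_univ _,
                ((stepEquiv c s hsc) ⟨f, (Finset.mem_filter.mp hf).2⟩).2⟩)
              (fun g hg => Finset.mem_filter.mpr ⟨Finset.mem_univ _,
                (((stepEquiv c s hsc).symm ⟨g, (Finset.mem_filter.mp hg).2⟩).2)⟩)
              ?_ ?_
            · intro f hf
              simp only [Subtype.coe_eta, Equiv.symm_apply_apply]
            · intro g hg
              simp only [Subtype.coe_eta, Equiv.apply_symm_apply]
        _ = (Fintype.card α - c (Fin.last e)).factorial := by
            rw [← hcompl]; exact key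
    calc (Finset.univ.filter fun f : α → Fin (e + 1) =>
            ∀ b, (Finset.univ.filter fun i => f i = b).card = c b).card
          * ∏ b, (c b).factorial
        = ∑ s ∈ Finset.powersetCard (c (Fin.last e)) (Finset.univ : Finset α),
            (((Finset.univ.filter fun f : α → Fin (e + 1) =>
                ∀ b, (Finset.univ.filter fun i => f i = b).card = c b).filter
              fun f => (Finset.univ.filter fun i => f i = Fin.last e) = s).card
              * ∏ b : Fin e, (c b.castSucc).factorial) * (c (Fin.last e)).factorial := by
          rw [hcard, Fin.prod_univ_castSucc, Finset.sum_mul]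
          exact Finset.sum_congr rfl fun s _ => by ring
      _ = ∑ _s ∈ Finset.powersetCard (c (Fin.last e)) (Finset.univ : Finset α),
            (Fintype.card α - c (Fin.last e)).factorial * (c (Fin.last e)).factorial := by
          refine Finset.sum_congr rfl fun s hs => ?_
          rw [hfib s hs]
      _ = (Fintype.card α).choose (c (Fin.last e))
            * ((Fintype.card α - c (Fin.last e)).factorial * (c (Fin.last e)).factorial) := by
          rw [Finset.sum_const, Finset.card_powersetCard, Finset.card_univ, smul_eq_mul]
      _ = (Fintype.card α).factorial := by
          rw [← Nat.choose_mul_factorial_mul_factorial hcL]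
          ring


lemma card_filter_subtype_and {α : Type*} [Fintype α] (r : α → Prop)
    [Fintype {x // r x}]
    (p : {x // r x} → Prop) [DecidablePred p] (q : α → Prop) [DecidablePred q]
    [DecidablePred r]
    (h1 : ∀ x : {x // r x}, p x ↔ q ↑x) :
    (Finset.univ.filter p).card = (Finset.univ.filter fun x => r x ∧ q x).card := by
  refine Finset.card_nbij (fun x => ↑x) ?_ ?_ ?_
  · intro x hx
    simp only [Finset.mem_coe, Finset.mem_filter, Finset.mem_univ, true_and] at hx ⊢
    exact ⟨x.2, (h1 x).mp hx⟩
  · intro x _ y _ hxy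
    exact Subtype.ext hxy
  · intro x hx
    simp only [Finset.mem_coe, Finset.mem_filter, Finset.mem_univ, true_and] at hx
    refine ⟨⟨x, hx.1⟩, ?_, rfl⟩
    simp only [Finset.mem_coe, Finset.mem_filter, Finset.mem_univ, true_and]
    exact (h1 _).mpr hx.2

lemma card_filter_and_add {α : Type*} [Fintype α] (p q : α → Prop)
    [DecidablePred p] [DecidablePred q] :
    (Finset.univ.filter fun x => p x ∧ q x).card
      + (Finset.univ.filter fun x => ¬ p x ∧ q x).card
      = (Finset.univ.filter q).card := by
  have h1 : (Finset.univ.filter fun x => p x ∧ q x) = (Finset.univ.filter q).filter p := by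
    rw [Finset.filter_filter]
    exact Finset.filter_congr fun x _ => and_comm
  have h2 : (Finset.univ.filter fun x => ¬ p x ∧ q x)
      = (Finset.univ.filter q).filter (fun x => ¬ p x) := by
    rw [Finset.filter_filter]
    exact Finset.filter_congr fun x _ => and_comm
  rw [h1, h2, Finset.card_filter_add_card_filter_not]

def splitEquiv (m n e' : ℕ) (k lam : Fin e' → ℕ) (hlam : ∀ a, lam a ≤ k a) :
    {f : Fin m → Fin e' // ∀ a, (Finset.univ.filter fun i => f i = a).card = k a ∧
        (Finset.univ.filter fun i : Fin m => (i : ℕ) < n ∧ f i = a).card = lam a}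
      ≃ {g : {i : Fin m // (i : ℕ) < n} → Fin e' //
          ∀ a, (Finset.univ.filter fun i => g i = a).card = lam a}
        × {h : {i : Fin m // ¬ (i : ℕ) < n} → Fin e' //
          ∀ a, (Finset.univ.filter fun i => h i = a).card = k a - lam a} where
  toFun fp :=
    (⟨fun i => fp.1 ↑i, fun a =>
      (card_filter_subtype_and (fun i : Fin m => (i : ℕ) < n)
        (fun i => fp.1 ↑i = a) (fun i => fp.1 i = a) (fun x => Iff.rfl)).trans (fp.2 a).2⟩,
     ⟨fun i => fp.1 ↑i, fun a => by
      refine (card_filter_subtype_and (fun i : Fin m => ¬ (i : ℕ) < n)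
        (fun i => fp.1 ↑i = a) (fun i => fp.1 i = a) (fun x => Iff.rfl)).trans ?_
      have h3 := card_filter_and_add (fun i : Fin m => (i : ℕ) < n) (fun i => fp.1 i = a)
      have h1 := (fp.2 a).1
      have h2 := (fp.2 a).2
      omega⟩)
  invFun gh := ⟨fun i => if hc : (i : ℕ) < n then gh.1.1 ⟨i, hc⟩ else gh.2.1 ⟨i, hc⟩, by
    intro a
    have hc2 : (Finset.univ.filter fun i : Fin m => (i : ℕ) < n ∧
        (if hc : (i : ℕ) < n then gh.1.1 ⟨i, hc⟩ else gh.2.1 ⟨i, hc⟩) = a).card = lam a := by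
      refine ((card_filter_subtype_and (fun i : Fin m => (i : ℕ) < n)
        (fun i => gh.1.1 i = a)
        (fun i => (if hc : (i : ℕ) < n then gh.1.1 ⟨i, hc⟩ else gh.2.1 ⟨i, hc⟩) = a)
        ?_).symm).trans (gh.1.2 a)
      intro x
      show gh.1.1 x = a ↔ (if hc : (↑x : ℕ) < n then gh.1.1 ⟨↑x, hc⟩ else gh.2.1 ⟨↑x, hc⟩) = a
      rw [dif_pos x.2, Subtype.coe_eta]
    have hc1 : (Finset.univ.filter fun i : Fin m => ¬ (i : ℕ) < n ∧
        (if hc : (i : ℕ) < n then gh.1.1 ⟨i, hc⟩ else gh.2.1 ⟨i, hc⟩) = a).card = k a - lam a := by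
      refine ((card_filter_subtype_and (fun i : Fin m => ¬ (i : ℕ) < n)
        (fun i => gh.2.1 i = a)
        (fun i => (if hc : (i : ℕ) < n then gh.1.1 ⟨i, hc⟩ else gh.2.1 ⟨i, hc⟩) = a)
        ?_).symm).trans (gh.2.2 a)
      intro x
      show gh.2.1 x = a ↔ (if hc : (↑x : ℕ) < n then gh.1.1 ⟨↑x, hc⟩ else gh.2.1 ⟨↑x, hc⟩) = a
      rw [dif_neg x.2, Subtype.coe_eta]
    have h3 : (Finset.univ.filter fun i : Fin m => (i : ℕ) < n ∧
          (if hc : (i : ℕ) < n then gh.1.1 ⟨i, hc⟩ else gh.2.1 ⟨i, hc⟩) = a).card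
        + (Finset.univ.filter fun i : Fin m => ¬ (i : ℕ) < n ∧
          (if hc : (i : ℕ) < n then gh.1.1 ⟨i, hc⟩ else gh.2.1 ⟨i, hc⟩) = a).card
        = (Finset.univ.filter fun i : Fin m =>
          (if hc : (i : ℕ) < n then gh.1.1 ⟨i, hc⟩ else gh.2.1 ⟨i, hc⟩) = a).card :=
      card_filter_and_add _ _
    have h4 := hlam a
    constructor
    · show (Finset.univ.filter fun i : Fin m =>
        (if hc : (i : ℕ) < n then gh.1.1 ⟨i, hc⟩ else gh.2.1 ⟨i, hc⟩) = a).card = k a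
      omega
    · exact hc2⟩
  left_inv fp := by
    apply Subtype.ext
    funext i
    show (if hc : (i : ℕ) < n then fp.1 ↑(⟨i, hc⟩ : {i : Fin m // (i : ℕ) < n})
      else fp.1 ↑(⟨i, hc⟩ : {i : Fin m // ¬ (i : ℕ) < n})) = fp.1 i
    by_cases hc : (i : ℕ) < n
    · rw [dif_pos hc]
    · rw [dif_neg hc]
  right_inv gh := by
    refine Prod.ext ?_ ?_
    · apply Subtype.ext
      funext x
      show (if hc : (↑x : ℕ) < n then gh.1.1 ⟨↑x, hc⟩ else gh.2.1 ⟨↑x, hc⟩) = gh.1.1 x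
      rw [dif_pos x.2, Subtype.coe_eta]
    · apply Subtype.ext
      funext x
      show (if hc : (↑x : ℕ) < n then gh.1.1 ⟨↑x, hc⟩ else gh.2.1 ⟨↑x, hc⟩) = gh.2.1 x
      rw [dif_neg x.2, Subtype.coe_eta]


lemma telescope_sum {e m : ℕ} (I : Fin (e + 2) → ℕ) (hI : Monotone I) (hI0 : I 0 = 0)
    (hIm : I (Fin.last (e + 1)) = m) :
    ∑ a : Fin (e + 1), (I a.succ - I a.castSucc) = m := by
  have hJm : Monotone (fun t : ℕ => I ⟨min t (e + 1), Nat.lt_succ_of_le (min_le_right _ _)⟩) := by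
    intro s t hst
    apply hI
    rw [Fin.le_def]
    exact min_le_min hst le_rfl
  calc ∑ a : Fin (e + 1), (I a.succ - I a.castSucc)
      = ∑ a : Fin (e + 1),
        (I ⟨min ((a : ℕ) + 1) (e + 1), Nat.lt_succ_of_le (min_le_right _ _)⟩
          - I ⟨min (a : ℕ) (e + 1), Nat.lt_succ_of_le (min_le_right _ _)⟩) := by
        refine Finset.sum_congr rfl fun a _ => ?_
        have ha := a.2
        congr 1
        · exact congrArg I (Fin.ext (by simp only [Fin.val_succ]; omega))
        · exact congrArg I (Fin.ext (by simp only [Fin.coe_castSucc]; omega))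
    _ = ∑ i ∈ Finset.range (e + 1),
        (I ⟨min (i + 1) (e + 1), Nat.lt_succ_of_le (min_le_right _ _)⟩
          - I ⟨min i (e + 1), Nat.lt_succ_of_le (min_le_right _ _)⟩) :=
        Fin.sum_univ_eq_sum_range
          (fun t => I ⟨min (t + 1) (e + 1), Nat.lt_succ_of_le (min_le_right _ _)⟩
            - I ⟨min t (e + 1), Nat.lt_succ_of_le (min_le_right _ _)⟩) (e + 1)
    _ = I ⟨min (e + 1) (e + 1), Nat.lt_succ_of_le (min_le_right _ _)⟩
          - I ⟨min 0 (e + 1), Nat.lt_succ_of_le (min_le_right _ _)⟩ :=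
        Finset.sum_range_tsub hJm (e + 1)
    _ = m := by
        have e3 : (⟨min (e + 1) (e + 1), Nat.lt_succ_of_le (min_le_right _ _)⟩ : Fin (e + 2))
            = Fin.last (e + 1) := Fin.ext (by simp)
        have e4 : (⟨min 0 (e + 1), Nat.lt_succ_of_le (min_le_right _ _)⟩ : Fin (e + 2)) = 0 :=
          Fin.ext (by simp)
        rw [e3, e4, hIm, hI0, Nat.sub_zero]

/-- For independent `X₁, …, X_m` in `[0,1]`, where `X₁, …, X_n` have common
continuous cdf `F` and `X_{n+1}, …, X_m` have common continuous cdf `G`, and for points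
`0 = y₀ ≤ y₁ ≤ … ≤ y_{e+1} = 1` and index vectors `i`, `λ` as described, the probability
of the event `A_{i,λ}` (for every `a`, exactly `i_a − i_{a−1}` of the `X`'s fall in
`(y_{a−1}, y_a]`, exactly `λ_a` of which come from the first population) equals
`n!(m−n)! ∏_a [F(y_a) − F(y_{a−1})]^{λ_a} [G(y_a) − G(y_{a−1})]^{i_a−i_{a−1}−λ_a}
  / (λ_a! (i_a−i_{a−1}−λ_a)!)`. -/
theorem stmt2 {Ω : Type*} [MeasurableSpace Ω] (μ : Measure Ω) [IsProbabilityMeasure μ]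
    (m n e : ℕ) (hnm : n ≤ m)
    (X : Fin m → Ω → ℝ) (hmeas : ∀ i, Measurable (X i))
    (hrange : ∀ i ω, X i ω ∈ Set.Icc (0 : ℝ) 1)
    (hindep : iIndepFun X μ)
    (F G : ℝ → ℝ) (hFc : Continuous F) (hGc : Continuous G)
    (hF : ∀ i : Fin m, (i : ℕ) < n → ∀ x, (μ {ω | X i ω ≤ x}).toReal = F x)
    (hG : ∀ i : Fin m, n ≤ (i : ℕ) → ∀ x, (μ {ω | X i ω ≤ x}).toReal = G x)
    (y : Fin (e + 2) → ℝ) (hy : Monotone y) (hy0 : y 0 = 0) (hy1 : y (Fin.last (e + 1)) = 1)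
    (I : Fin (e + 2) → ℕ) (hI : Monotone I) (hI0 : I 0 = 0) (hIm : I (Fin.last (e + 1)) = m)
    (lam : Fin (e + 1) → ℕ) (hlamsum : ∑ a, lam a = n)
    (hlam : ∀ a : Fin (e + 1), lam a ≤ I a.succ - I a.castSucc) :
    (μ {ω | ∀ a : Fin (e + 1),
        (Finset.univ.filter fun i : Fin m =>
            X i ω ∈ Set.Ioc (y a.castSucc) (y a.succ)).card = I a.succ - I a.castSucc
        ∧ (Finset.univ.filter fun i : Fin m =>
            (i : ℕ) < n ∧ X i ω ∈ Set.Ioc (y a.castSucc) (y a.succ)).card = lam a}).toReal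
      = (n.factorial : ℝ) * ((m - n).factorial : ℝ)
        * ∏ a : Fin (e + 1),
            (F (y a.succ) - F (y a.castSucc)) ^ lam a
            * (G (y a.succ) - G (y a.castSucc)) ^ (I a.succ - I a.castSucc - lam a)
            / (((lam a).factorial : ℝ)
              * ((I a.succ - I a.castSucc - lam a).factorial : ℝ)) := by
  have hdisj : ∀ (x : ℝ) (a b : Fin (e + 1)),
      x ∈ Set.Ioc (y a.castSucc) (y a.succ) → x ∈ Set.Ioc (y b.castSucc) (y b.succ) → a = b := by
    have key : ∀ a b : Fin (e + 1), a < b → ∀ x : ℝ,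
        x ∈ Set.Ioc (y a.castSucc) (y a.succ) → x ∈ Set.Ioc (y b.castSucc) (y b.succ) → False := by
      intro a b hab x hxa hxb
      have h1 : y a.succ ≤ y b.castSucc := by
        apply hy
        rw [Fin.le_def]
        simp only [Fin.val_succ, Fin.coe_castSucc]
        exact Fin.lt_def.mp hab
      exact absurd (hxa.2.trans h1) (not_le.mpr hxb.1)
    intro x a b hxa hxb
    rcases lt_trichotomy a b with h | h | h
    · exact (key a b h x hxa hxb).elim
    · exact h
    · exact (key b a h x hxb hxa).elim
  have hksum : ∑ a : Fin (e + 1), (I a.succ - I a.castSucc) = m := telescope_sum I hI hI0 hIm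
  have hprob : ∀ (i : Fin m) (a : Fin (e + 1)),
      (μ (X i ⁻¹' Set.Ioc (y a.castSucc) (y a.succ))).toReal
        = if (i : ℕ) < n then F (y a.succ) - F (y a.castSucc)
          else G (y a.succ) - G (y a.castSucc) := by
    intro i a
    have hle : y a.castSucc ≤ y a.succ := hy (Fin.castSucc_le_succ a)
    have hsub : X i ⁻¹' Set.Ioc (y a.castSucc) (y a.succ)
        = {ω | X i ω ≤ y a.succ} \ {ω | X i ω ≤ y a.castSucc} := by
      ext ω
      simp only [Set.mem_preimage, Set.mem_Ioc, Set.mem_diff, Set.mem_setOf_eq, not_le]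
      exact ⟨fun h => ⟨h.2, h.1⟩, fun h => ⟨h.2, h.1⟩⟩
    have hm2 : MeasurableSet {ω | X i ω ≤ y a.castSucc} := (hmeas i) measurableSet_Iic
    have hmono : μ {ω | X i ω ≤ y a.castSucc} ≤ μ {ω | X i ω ≤ y a.succ} :=
      measure_mono (fun ω h => le_trans h hle)
    have hss : {ω | X i ω ≤ y a.castSucc} ⊆ {ω | X i ω ≤ y a.succ} :=
      fun ω h => le_trans h hle
    rw [hsub, measure_diff hss hm2.nullMeasurableSet (measure_ne_top μ _),
      ENNReal.toReal_sub_of_le hmono (measure_ne_top μ _)]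
    by_cases hi : (i : ℕ) < n
    · rw [if_pos hi, hF i hi, hF i hi]
    · rw [if_neg hi, hG i (le_of_not_gt hi), hG i (le_of_not_gt hi)]
  have hEmeas : ∀ f : Fin m → Fin (e + 1),
      MeasurableSet (⋂ i, X i ⁻¹' Set.Ioc (y (f i).castSucc) (y (f i).succ)) :=
    fun f => MeasurableSet.iInter fun i => (hmeas i) measurableSet_Ioc
  have hEprod : ∀ f : Fin m → Fin (e + 1),
      (μ (⋂ i, X i ⁻¹' Set.Ioc (y (f i).castSucc) (y (f i).succ))).toReal
        = ∏ i : Fin m, (if (i : ℕ) < n then F (y (f i).succ) - F (y (f i).castSucc)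
            else G (y (f i).succ) - G (y (f i).castSucc)) := by
    intro f
    rw [hindep.meas_iInter
        (fun i => ⟨Set.Ioc (y (f i).castSucc) (y (f i).succ), measurableSet_Ioc, rfl⟩),
      ENNReal.toReal_prod]
    exact Finset.prod_congr rfl fun i _ => hprob i (f i)
  set T : Finset (Fin m → Fin (e + 1)) := Finset.univ.filter fun f =>
    ∀ a, (Finset.univ.filter fun i => f i = a).card = I a.succ - I a.castSucc ∧
      (Finset.univ.filter fun i : Fin m => (i : ℕ) < n ∧ f i = a).card = lam a with hTdef
  have hset : {ω | ∀ a : Fin (e + 1),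
        (Finset.univ.filter fun i : Fin m =>
            X i ω ∈ Set.Ioc (y a.castSucc) (y a.succ)).card = I a.succ - I a.castSucc
        ∧ (Finset.univ.filter fun i : Fin m =>
            (i : ℕ) < n ∧ X i ω ∈ Set.Ioc (y a.castSucc) (y a.succ)).card = lam a}
      = ⋃ f ∈ T, ⋂ i, X i ⁻¹' Set.Ioc (y (f i).castSucc) (y (f i).succ) := by
    ext ω
    simp only [Set.mem_setOf_eq, Set.mem_iUnion, Set.mem_iInter, Set.mem_preimage, exists_prop]
    constructor
    · intro hω
      have hdisjf : ∀ a ∈ (Finset.univ : Finset (Fin (e + 1))), ∀ b ∈ Finset.univ, a ≠ b →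
          Disjoint
            (Finset.univ.filter fun i : Fin m => X i ω ∈ Set.Ioc (y a.castSucc) (y a.succ))
            (Finset.univ.filter fun i : Fin m => X i ω ∈ Set.Ioc (y b.castSucc) (y b.succ)) := by
        intro a _ b _ hab
        rw [Finset.disjoint_left]
        intro i hia hib
        exact hab (hdisj (X i ω) a b (Finset.mem_filter.mp hia).2 (Finset.mem_filter.mp hib).2)
      have hU : (Finset.univ.biUnion fun a : Fin (e + 1) =>
          Finset.univ.filter fun i : Fin m => X i ω ∈ Set.Ioc (y a.castSucc) (y a.succ))
          = Finset.univ := by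
        apply Finset.eq_univ_of_card
        rw [Finset.card_biUnion hdisjf, Fintype.card_fin]
        calc ∑ a : Fin (e + 1), (Finset.univ.filter fun i : Fin m =>
              X i ω ∈ Set.Ioc (y a.castSucc) (y a.succ)).card
            = ∑ a : Fin (e + 1), (I a.succ - I a.castSucc) :=
              Finset.sum_congr rfl fun a _ => (hω a).1
          _ = m := hksum
      have hex : ∀ i : Fin m, ∃ a : Fin (e + 1),
          X i ω ∈ Set.Ioc (y a.castSucc) (y a.succ) := by
        intro i
        have hmem : i ∈ Finset.univ.biUnion fun a : Fin (e + 1) =>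
            Finset.univ.filter fun i : Fin m => X i ω ∈ Set.Ioc (y a.castSucc) (y a.succ) := by
          rw [hU]; exact Finset.mem_univ i
        rcases Finset.mem_biUnion.mp hmem with ⟨a, _, hia⟩
        exact ⟨a, (Finset.mem_filter.mp hia).2⟩
      choose f hf using hex
      refine ⟨f, ?_, fun i => hf i⟩
      rw [hTdef, Finset.mem_filter]
      refine ⟨Finset.mem_univ _, fun a => ?_⟩
      have hfa : (Finset.univ.filter fun i : Fin m => f i = a)
          = Finset.univ.filter fun i : Fin m => X i ω ∈ Set.Ioc (y a.castSucc) (y a.succ) := by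
        apply Finset.filter_congr
        intro i _
        exact ⟨fun h => h ▸ hf i, fun h => hdisj (X i ω) (f i) a (hf i) h⟩
      have hfa2 : (Finset.univ.filter fun i : Fin m => (i : ℕ) < n ∧ f i = a)
          = Finset.univ.filter fun i : Fin m =>
              (i : ℕ) < n ∧ X i ω ∈ Set.Ioc (y a.castSucc) (y a.succ) := by
        apply Finset.filter_congr
        intro i _
        exact and_congr_right fun _ =>
          ⟨fun h => h ▸ hf i, fun h => hdisj (X i ω) (f i) a (hf i) h⟩
      rw [hfa, hfa2]
      exact hω a
    · rintro ⟨f, hfT, hωE⟩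
      have hT2 := (Finset.mem_filter.mp (hTdef ▸ hfT)).2
      intro a
      have hfa : (Finset.univ.filter fun i : Fin m =>
            X i ω ∈ Set.Ioc (y a.castSucc) (y a.succ))
          = Finset.univ.filter fun i : Fin m => f i = a := by
        apply Finset.filter_congr
        intro i _
        exact ⟨fun h => hdisj (X i ω) (f i) a (hωE i) h, fun h => h ▸ hωE i⟩
      have hfa2 : (Finset.univ.filter fun i : Fin m =>
            (i : ℕ) < n ∧ X i ω ∈ Set.Ioc (y a.castSucc) (y a.succ))
          = Finset.univ.filter fun i : Fin m => (i : ℕ) < n ∧ f i = a := by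
        apply Finset.filter_congr
        intro i _
        exact and_congr_right fun _ =>
          ⟨fun h => hdisj (X i ω) (f i) a (hωE i) h, fun h => h ▸ hωE i⟩
      rw [hfa, hfa2]
      exact hT2 a
  have hpair : (↑T : Set (Fin m → Fin (e + 1))).PairwiseDisjoint
      (fun f => ⋂ i, X i ⁻¹' Set.Ioc (y (f i).castSucc) (y (f i).succ)) := by
    intro f _ g _ hfg
    refine Set.disjoint_left.mpr fun ω hωf hωg => hfg (funext fun i =>
      hdisj (X i ω) (f i) (g i) (Set.mem_iInter.mp hωf i) (Set.mem_iInter.mp hωg i))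
  rw [hset, measure_biUnion_finset hpair (fun f _ => hEmeas f),
    ENNReal.toReal_sum (fun f _ => measure_ne_top μ _)]
  have hgroup : ∀ f ∈ T,
      (∏ i : Fin m, (if (i : ℕ) < n then F (y (f i).succ) - F (y (f i).castSucc)
          else G (y (f i).succ) - G (y (f i).castSucc)))
      = ∏ a : Fin (e + 1), ((F (y a.succ) - F (y a.castSucc)) ^ lam a
          * (G (y a.succ) - G (y a.castSucc)) ^ (I a.succ - I a.castSucc - lam a)) := by
    intro f hfT
    have hT2 := (Finset.mem_filter.mp (hTdef ▸ hfT)).2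
    rw [← Finset.prod_fiberwise_of_maps_to (g := f) (t := Finset.univ)
      (fun i _ => Finset.mem_univ (f i))]
    refine Finset.prod_congr rfl fun a _ => ?_
    have hre : ∀ i ∈ Finset.univ.filter fun i : Fin m => f i = a,
        (if (i : ℕ) < n then F (y (f i).succ) - F (y (f i).castSucc)
          else G (y (f i).succ) - G (y (f i).castSucc))
        = (if (i : ℕ) < n then F (y a.succ) - F (y a.castSucc)
          else G (y a.succ) - G (y a.castSucc)) := by
      intro i hi
      rw [(Finset.mem_filter.mp hi).2]
    rw [Finset.prod_congr rfl hre, Finset.prod_ite (fun _ => F (y a.succ) - F (y a.castSucc))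
        (fun _ => G (y a.succ) - G (y a.castSucc)), Finset.prod_const, Finset.prod_const]
    have hc1 : ((Finset.univ.filter fun i : Fin m => f i = a).filter
        fun i : Fin m => (i : ℕ) < n).card = lam a := by
      rw [Finset.filter_filter]
      rw [show (Finset.univ.filter fun i : Fin m => f i = a ∧ (i : ℕ) < n)
          = Finset.univ.filter fun i : Fin m => (i : ℕ) < n ∧ f i = a from
        Finset.filter_congr fun i _ => and_comm]
      exact (hT2 a).2
    have hadd := Finset.card_filter_add_card_filter_not
      (s := Finset.univ.filter fun i : Fin m => f i = a) (p := fun i : Fin m => (i : ℕ) < n)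
    have hc2 : ((Finset.univ.filter fun i : Fin m => f i = a).filter
        fun i : Fin m => ¬ (i : ℕ) < n).card = I a.succ - I a.castSucc - lam a := by
      have h1 := (hT2 a).1
      omega
    rw [hc1, hc2]
  rw [Finset.sum_congr rfl (fun f hf => (hEprod f).trans (hgroup f hf)),
    Finset.sum_const, nsmul_eq_mul]
  -- counting
  have hcard1 : Fintype.card {i : Fin m // (i : ℕ) < n} = n := by
    have eqv : {i : Fin m // (i : ℕ) < n} ≃ Fin n :=
      ⟨fun i => ⟨(i.1 : ℕ), i.2⟩, fun j => ⟨⟨(j : ℕ), lt_of_lt_of_le j.2 hnm⟩, j.2⟩,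
       fun i => Subtype.ext (Fin.ext rfl), fun j => Fin.ext rfl⟩
    rw [Fintype.card_congr eqv, Fintype.card_fin]
  have hcard2 : Fintype.card {i : Fin m // ¬ (i : ℕ) < n} = m - n := by
    rw [Fintype.card_subtype_compl, hcard1, Fintype.card_fin]
  have h1 := count_aux (e + 1) {i : Fin m // (i : ℕ) < n} lam (by rw [hcard1]; exact hlamsum)
  have h2 := count_aux (e + 1) {i : Fin m // ¬ (i : ℕ) < n}
    (fun a => I a.succ - I a.castSucc - lam a) (by
      show ∑ a : Fin (e + 1), (I a.succ - I a.castSucc - lam a) = _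
      rw [hcard2, Finset.sum_tsub_distrib Finset.univ (fun a _ => hlam a), hksum, hlamsum])
  rw [hcard1] at h1
  rw [hcard2] at h2
  have hTcard : T.card * ((∏ a, (lam a).factorial)
      * ∏ a : Fin (e + 1), (I a.succ - I a.castSucc - lam a).factorial)
      = n.factorial * (m - n).factorial := by
    have hsplit : T.card
        = (Finset.univ.filter fun g : {i : Fin m // (i : ℕ) < n} → Fin (e + 1) =>
            ∀ a, (Finset.univ.filter fun i => g i = a).card = lam a).card
          * (Finset.univ.filter fun h : {i : Fin m // ¬ (i : ℕ) < n} → Fin (e + 1) =>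
            ∀ a, (Finset.univ.filter fun i => h i = a).card
              = I a.succ - I a.castSucc - lam a).card := by
      rw [hTdef, ← Fintype.card_subtype, ← Fintype.card_subtype, ← Fintype.card_subtype,
        ← Fintype.card_prod]
      exact Fintype.card_congr
        (splitEquiv m n (e + 1) (fun a => I a.succ - I a.castSucc) lam hlam)
    calc T.card * ((∏ a, (lam a).factorial)
          * ∏ a : Fin (e + 1), (I a.succ - I a.castSucc - lam a).factorial)
        = ((Finset.univ.filter fun g : {i : Fin m // (i : ℕ) < n} → Fin (e + 1) =>
              ∀ a, (Finset.univ.filter fun i => g i = a).card = lam a).card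
            * ∏ a, (lam a).factorial)
          * ((Finset.univ.filter fun h : {i : Fin m // ¬ (i : ℕ) < n} → Fin (e + 1) =>
              ∀ a, (Finset.univ.filter fun i => h i = a).card
                = I a.succ - I a.castSucc - lam a).card
            * ∏ a : Fin (e + 1), (I a.succ - I a.castSucc - lam a).factorial) := by
          rw [hsplit]; ring
      _ = n.factorial * (m - n).factorial := congrArg₂ (· * ·) h1 h2
  -- final arithmetic
  have hDpos : (0 : ℝ) < ∏ a : Fin (e + 1),
      (((lam a).factorial : ℝ) * ((I a.succ - I a.castSucc - lam a).factorial : ℝ)) :=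
    Finset.prod_pos fun a _ => mul_pos
      (by exact_mod_cast (lam a).factorial_pos)
      (by exact_mod_cast (I a.succ - I a.castSucc - lam a).factorial_pos)
  have hcast : (T.card : ℝ) * ∏ a : Fin (e + 1),
      (((lam a).factorial : ℝ) * ((I a.succ - I a.castSucc - lam a).factorial : ℝ))
      = (n.factorial : ℝ) * ((m - n).factorial : ℝ) := by
    rw [Finset.prod_mul_distrib]
    exact_mod_cast congrArg (Nat.cast : ℕ → ℝ) hTcard
  rw [Finset.prod_div_distrib, ← hcast, mul_assoc]
  congr 1
  rw [mul_comm]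
  exact (div_mul_cancel₀ _ hDpos.ne').symm
end

section
/- Let ε₁,…,ε_N be independent normal random variables each with mean μ_A and variance σ² (σ > 0), let ε̄ be their sample mean, let Z = (ε̄ − μ₀)/(σ/√N), and define the two‑sided p‑value X = 2Φ(Z) if Z ≤ 0 and X = 2[1 − Φ(Z)] if Z > 0, where Φ is the standard normal cumulative distribution function. Then for every x ∈ (0,1), the cumulative distribution function of X satisfies Pr(X < x) = Φ( Φ⁻¹(x/2) + (μ₀ − μ_A)·√N/σ ) + 1 − Φ( Φ⁻¹(1 − x/2) + (μ₀ − μ_A)·√N/σ ), where Φ⁻¹ denotes the inverse of Φ. -/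
open MeasureTheory ProbabilityTheory
open scoped NNReal ENNReal

section Aux
open Real

private lemma pdf_factor {m₁ m₂ : ℝ} {v₁ v₂ : ℝ≥0} (h₁ : v₁ ≠ 0) (h₂ : v₂ ≠ 0) (z x : ℝ) :
    gaussianPDFReal m₁ v₁ x * gaussianPDFReal m₂ v₂ (z - x)
      = gaussianPDFReal (m₁ + m₂) (v₁ + v₂) z
        * gaussianPDFReal (m₁ + (v₁ / (v₁ + v₂) : ℝ≥0) * (z - m₁ - m₂)) (v₁ * v₂ / (v₁ + v₂)) x := by
  have ha : (0:ℝ) < v₁ := lt_of_le_of_ne v₁.coe_nonneg (by exact_mod_cast h₁.symm)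
  have hb : (0:ℝ) < v₂ := lt_of_le_of_ne v₂.coe_nonneg (by exact_mod_cast h₂.symm)
  have hab : (0:ℝ) < (v₁:ℝ) + v₂ := by linarith
  have hπ : (0:ℝ) < π := Real.pi_pos
  simp only [gaussianPDFReal, NNReal.coe_add, NNReal.coe_div, NNReal.coe_mul]
  rw [mul_mul_mul_comm, ← Real.exp_add, mul_mul_mul_comm, ← Real.exp_add]
  congr 1
  · rw [← mul_inv, ← mul_inv, ← Real.sqrt_mul (by positivity), ← Real.sqrt_mul (by positivity)]
    congr 2
    field_simp
  · congr 1
    field_simp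
    ring


private lemma vstar_ne {v₁ v₂ : ℝ≥0} (h₁ : v₁ ≠ 0) (h₂ : v₂ ≠ 0) : v₁ * v₂ / (v₁ + v₂) ≠ 0 := by
  refine div_ne_zero (mul_ne_zero h₁ h₂) ?_
  simp [h₁, h₂]

private lemma pdf_conv {m₁ m₂ : ℝ} {v₁ v₂ : ℝ≥0} (h₁ : v₁ ≠ 0) (h₂ : v₂ ≠ 0) (z : ℝ) :
    ∫⁻ x, gaussianPDF m₁ v₁ x * gaussianPDF m₂ v₂ (z - x)
      = gaussianPDF (m₁ + m₂) (v₁ + v₂) z := by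
  have hfe : (fun x => gaussianPDFReal m₁ v₁ x * gaussianPDFReal m₂ v₂ (z - x))
      = fun x => gaussianPDFReal (m₁ + m₂) (v₁ + v₂) z
        * gaussianPDFReal (m₁ + (v₁ / (v₁ + v₂) : ℝ≥0) * (z - m₁ - m₂)) (v₁ * v₂ / (v₁ + v₂)) x :=
    funext (pdf_factor h₁ h₂ z)
  have hint : Integrable (fun x => gaussianPDFReal m₁ v₁ x * gaussianPDFReal m₂ v₂ (z - x)) := by
    rw [hfe]; exact (integrable_gaussianPDFReal _ _).const_mul _
  simp_rw [gaussianPDF, ← ENNReal.ofReal_mul (gaussianPDFReal_nonneg _ _ _)]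
  rw [← ofReal_integral_eq_lintegral_ofReal hint
    (ae_of_all _ fun x => mul_nonneg (gaussianPDFReal_nonneg _ _ _) (gaussianPDFReal_nonneg _ _ _))]
  congr 1
  rw [hfe, integral_const_mul, integral_gaussianPDFReal_eq_one _ (vstar_ne h₁ h₂), mul_one]

private lemma gaussian_conv {m₁ m₂ : ℝ} {v₁ v₂ : ℝ≥0} (h₁ : v₁ ≠ 0) (h₂ : v₂ ≠ 0) :
    Measure.map (fun p : ℝ × ℝ => p.1 + p.2)
      ((gaussianReal m₁ v₁).prod (gaussianReal m₂ v₂)) = gaussianReal (m₁ + m₂) (v₁ + v₂) := by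
  have h12 : v₁ + v₂ ≠ 0 := by simp [h₁, h₂]
  have hm2 : Measurable fun q : ℝ × ℝ => gaussianPDF m₁ v₁ q.1 * gaussianPDF m₂ v₂ (q.2 - q.1) :=
    ((measurable_gaussianPDF m₁ v₁).comp measurable_fst).mul
      ((measurable_gaussianPDF m₂ v₂).comp (measurable_snd.sub measurable_fst))
  ext s hs
  rw [Measure.map_apply measurable_add hs, Measure.prod_apply (measurable_add hs)]
  have hQ : ∀ x : ℝ, gaussianReal m₂ v₂ (Prod.mk x ⁻¹' ((fun p : ℝ × ℝ => p.1 + p.2) ⁻¹' s))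
      = ∫⁻ z in s, gaussianPDF m₂ v₂ (z - x) := by
    intro x
    have h : (Prod.mk x ⁻¹' ((fun p : ℝ × ℝ => p.1 + p.2) ⁻¹' s)) = (fun y => x + y) ⁻¹' s := rfl
    rw [h, ← Measure.map_apply (measurable_const_add x) hs, gaussianReal_map_const_add,
      gaussianReal_apply _ h₂]
    refine lintegral_congr fun z => ?_
    rw [gaussianPDF, gaussianPDF, ← gaussianPDFReal_sub]
  simp_rw [hQ]
  have hg : Measurable fun x : ℝ => ∫⁻ z in s, gaussianPDF m₂ v₂ (z - x) := by
    exact Measurable.lintegral_prod_right'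
      ((measurable_gaussianPDF m₂ v₂).comp (measurable_snd.sub measurable_fst))
  rw [gaussianReal_of_var_ne_zero _ h₁,
    lintegral_withDensity_eq_lintegral_mul _ (measurable_gaussianPDF _ _) hg]
  simp only [Pi.mul_apply]
  rw [lintegral_congr fun x =>
    (lintegral_const_mul' (gaussianPDF m₁ v₁ x) _ ENNReal.ofReal_ne_top).symm]
  rw [lintegral_lintegral_swap hm2.aemeasurable]
  rw [setLIntegral_congr_fun hs (fun z _ => pdf_conv h₁ h₂ z)]
  rw [← gaussianReal_apply _ h12]


private lemma map_add_of_indep {Ω : Type*} [MeasurableSpace Ω] {μ : Measure Ω} [IsProbabilityMeasure μ]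
    {X Y : Ω → ℝ} (hX : Measurable X) (hY : Measurable Y) (hXY : IndepFun X Y μ)
    {m₁ m₂ : ℝ} {v₁ v₂ : ℝ≥0} (h₁ : v₁ ≠ 0) (h₂ : v₂ ≠ 0)
    (hlX : Measure.map X μ = gaussianReal m₁ v₁) (hlY : Measure.map Y μ = gaussianReal m₂ v₂) :
    Measure.map (fun ω => X ω + Y ω) μ = gaussianReal (m₁ + m₂) (v₁ + v₂) := by
  have hp : Measure.map (fun ω => (X ω, Y ω)) μ = (Measure.map X μ).prod (Measure.map Y μ) :=
    (indepFun_iff_map_prod_eq_prod_map_map hX.aemeasurable hY.aemeasurable).mp hXY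
  have : (fun ω => X ω + Y ω) = (fun p : ℝ × ℝ => p.1 + p.2) ∘ fun ω => (X ω, Y ω) := rfl
  rw [this, ← Measure.map_map measurable_add (hX.prodMk hY), hp, hlX, hlY,
    gaussian_conv h₁ h₂]

private lemma map_sum_gaussian {Ω : Type*} [MeasurableSpace Ω] {μ : Measure Ω} [IsProbabilityMeasure μ]
    {N : ℕ} {ε : Fin N → Ω → ℝ} (hmeas : ∀ i, Measurable (ε i))
    (hindep : iIndepFun ε μ)
    {m : ℝ} {v : ℝ≥0} (hv : v ≠ 0) (hlaw : ∀ i, Measure.map (ε i) μ = gaussianReal m v)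
    (s : Finset (Fin N)) (hs : s.Nonempty) :
    Measure.map (fun ω => ∑ i ∈ s, ε i ω) μ
      = gaussianReal (s.card * m) (s.card * v) := by
  induction hs using Finset.Nonempty.cons_induction with
  | singleton a => simpa using hlaw a
  | cons a s ha hs ih =>
    have hind : IndepFun (ε a) (fun ω => ∑ i ∈ s, ε i ω) μ := by
      have h := (hindep.indepFun_finsetSum_of_notMem hmeas ha).symm
      have he : (∑ j ∈ s, ε j) = fun ω => ∑ i ∈ s, ε i ω := by
        ext ω; simp [Finset.sum_apply]
      rwa [he] at h
    have hcard : s.card ≠ 0 := by simpa using hs.ne_empty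
    have hv' : (s.card : ℝ≥0) * v ≠ 0 := by
      simp [hv, hcard]
    have h := map_add_of_indep (hmeas a) (by exact Finset.measurable_sum s fun i _ => hmeas i)
      hind hv hv' (hlaw a) ih
    simp only [Finset.sum_cons]
    rw [h]
    congr 1
    · push_cast [Finset.card_cons]; ring
    · rw [Finset.card_cons]; push_cast; ring


private lemma g01_singleton (mm t : ℝ) : gaussianReal mm 1 {t} = 0 :=
  gaussianReal_absolutelyContinuous mm one_ne_zero (volume_singleton)

private lemma g01_Iio (mm t : ℝ) : gaussianReal mm 1 (Set.Iio t) = gaussianReal mm 1 (Set.Iic t) := by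
  refine le_antisymm (measure_mono Set.Iio_subset_Iic_self) ?_
  calc gaussianReal mm 1 (Set.Iic t) = gaussianReal mm 1 (Set.Iio t ∪ {t}) := by
        rw [Set.Iio_union_right]
    _ ≤ gaussianReal mm 1 (Set.Iio t) + gaussianReal mm 1 {t} := measure_union_le _ _
    _ = gaussianReal mm 1 (Set.Iio t) := by rw [g01_singleton, add_zero]

private lemma phi_mono {Φ : ℝ → ℝ} (hΦ : ∀ x, Φ x = ((gaussianReal 0 1) (Set.Iic x)).toReal) :
    StrictMono Φ := by
  intro s t hst
  have hU : Set.Iic s ∪ Set.Ioc s t = Set.Iic t := Set.Iic_union_Ioc_eq_Iic hst.le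
  have hdisj : Disjoint (Set.Iic s) (Set.Ioc s t) := Set.Iic_disjoint_Ioc le_rfl
  have hadd : gaussianReal 0 1 (Set.Iic t)
      = gaussianReal 0 1 (Set.Iic s) + gaussianReal 0 1 (Set.Ioc s t) := by
    rw [← hU, measure_union hdisj measurableSet_Ioc]
  have hpos : gaussianReal 0 1 (Set.Ioc s t) ≠ 0 := by
    intro h
    have hv := gaussianReal_absolutelyContinuous' 0 one_ne_zero h
    rw [Real.volume_Ioc] at hv
    simp only [ENNReal.ofReal_eq_zero, sub_nonpos] at hv
    linarith
  rw [hΦ, hΦ]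
  rw [ENNReal.toReal_lt_toReal (measure_ne_top _ _) (measure_ne_top _ _), hadd]
  exact ENNReal.lt_add_right (measure_ne_top _ _) hpos

private lemma phi_half {Φ : ℝ → ℝ} (hΦ : ∀ x, Φ x = ((gaussianReal 0 1) (Set.Iic x)).toReal) :
    Φ 0 = 1 / 2 := by
  have hmap : Measure.map (fun y : ℝ => -y) (gaussianReal 0 1) = gaussianReal 0 1 := by
    have h := gaussianReal_map_const_mul (μ := 0) (v := 1) (-1)
    have hv : (NNReal.mk ((-1:ℝ)^2) (sq_nonneg _)) * 1 = 1 := by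
      rw [mul_one]; ext; norm_num
    rw [hv] at h
    simpa [neg_one_mul] using h
  have hIci : gaussianReal 0 1 (Set.Iic 0) = gaussianReal 0 1 (Set.Ici 0) := by
    conv_lhs => rw [← hmap]
    rw [Measure.map_apply (measurable_neg) measurableSet_Iic]
    congr 1
    ext y; simp
  have hIoi : gaussianReal 0 1 (Set.Ici 0) = gaussianReal 0 1 (Set.Ioi 0) := by
    refine le_antisymm ?_ (measure_mono Set.Ioi_subset_Ici_self)
    calc gaussianReal 0 1 (Set.Ici 0) = gaussianReal 0 1 (Set.Ioi 0 ∪ {0}) := by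
          rw [Set.Ioi_union_left]
      _ ≤ gaussianReal 0 1 (Set.Ioi 0) + gaussianReal 0 1 {0} := measure_union_le _ _
      _ = gaussianReal 0 1 (Set.Ioi 0) := by rw [g01_singleton, add_zero]
  have hcompl : gaussianReal 0 1 (Set.Iic 0) + gaussianReal 0 1 (Set.Ioi 0) = 1 := by
    have h := measure_add_measure_compl (μ := gaussianReal 0 1) (measurableSet_Iic (a := (0:ℝ)))
    rwa [Set.compl_Iic, measure_univ] at h
  rw [hIoi] at hIci
  rw [← hIci] at hcompl
  have := congrArg ENNReal.toReal hcompl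
  rw [ENNReal.toReal_add (measure_ne_top _ _) (measure_ne_top _ _), ENNReal.toReal_one] at this
  rw [hΦ]
  linarith


end Aux

/-- doc -/
theorem stmt10 {Ω : Type*} [MeasurableSpace Ω] (μ : Measure Ω) [IsProbabilityMeasure μ]
    (N : ℕ) (hN : 0 < N) (μ₀ μA σ : ℝ) (hσ : 0 < σ)
    (ε : Fin N → Ω → ℝ) (hmeas : ∀ δ, Measurable (ε δ))
    (hindep : iIndepFun ε μ)
    (hlaw : ∀ δ, Measure.map (ε δ) μ = gaussianReal μA ⟨σ ^ 2, sq_nonneg σ⟩)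
    (εbar : Ω → ℝ) (hεbar : ∀ ω, εbar ω = (N : ℝ)⁻¹ * ∑ δ, ε δ ω)
    (Z : Ω → ℝ) (hZ : ∀ ω, Z ω = (εbar ω - μ₀) / (σ / Real.sqrt N))
    (Φ : ℝ → ℝ) (hΦ : ∀ x, Φ x = ((gaussianReal 0 1) (Set.Iic x)).toReal)
    (Φinv : ℝ → ℝ)
    (hΦinv : ∀ p ∈ Set.Ioo (0 : ℝ) 1, Φ (Φinv p) = p)
    (hinvΦ : ∀ x : ℝ, Φinv (Φ x) = x)
    (X : Ω → ℝ)
    (hX : ∀ ω, X ω = if Z ω ≤ 0 then 2 * Φ (Z ω) else 2 * (1 - Φ (Z ω))) :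
    ∀ x ∈ Set.Ioo (0 : ℝ) 1,
      (μ {ω | X ω < x}).toReal
        = Φ (Φinv (x / 2) + (μ₀ - μA) * Real.sqrt N / σ)
          + 1 - Φ (Φinv (1 - x / 2) + (μ₀ - μA) * Real.sqrt N / σ) := by
  intro x hx
  haveI : Nonempty (Fin N) := Fin.pos_iff_nonempty.mp hN
  have hNR : (0:ℝ) < N := Nat.cast_pos.mpr hN
  set sN := Real.sqrt N with hsNdef
  have hsN : 0 < sN := Real.sqrt_pos.mpr hNR
  have hsq : sN ^ 2 = N := Real.sq_sqrt hNR.le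
  set V : ℝ≥0 := ⟨σ ^ 2, sq_nonneg σ⟩ with hV
  have hVne : V ≠ 0 := by
    intro h
    have : (V : ℝ) = 0 := by rw [h]; simp
    exact pow_ne_zero 2 hσ.ne' this
  -- law of the sum
  have hS : Measure.map (fun ω => ∑ i, ε i ω) μ
      = gaussianReal (N * μA) ((N : ℝ≥0) * V) := by
    have h := map_sum_gaussian hmeas hindep hVne hlaw Finset.univ Finset.univ_nonempty
    simpa [Finset.card_univ] using h
  have hSm : Measurable fun ω => ∑ i, ε i ω :=
    Finset.measurable_sum _ fun i _ => hmeas i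
  set c : ℝ := sN / (N * σ) with hc
  set d : ℝ := -(μ₀ * sN / σ) with hd
  set m : ℝ := (μA - μ₀) * sN / σ with hm
  have hZeq : Z = fun ω => (∑ i, ε i ω) * c + d := by
    funext ω
    rw [hZ, hεbar, hc, hd]
    field_simp
    ring
  have hZmeas : Measurable Z := by
    rw [hZeq]; exact (hSm.mul_const c).add_const d
  -- law of Z
  have hZlaw : Measure.map Z μ = gaussianReal m 1 := by
    have h1 : Measure.map (fun ω => (∑ i, ε i ω) * c) μ
        = gaussianReal (c * (N * μA)) (NNReal.mk (c ^ 2) (sq_nonneg c) * ((N : ℝ≥0) * V)) := by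
      have he : (fun ω => (∑ i, ε i ω) * c) = (· * c) ∘ (fun ω => ∑ i, ε i ω) := rfl
      rw [he, ← Measure.map_map (measurable_mul_const c) hSm, hS, gaussianReal_map_mul_const]
    have h2 : Measure.map Z μ
        = gaussianReal (c * (N * μA) + d) (NNReal.mk (c ^ 2) (sq_nonneg c) * ((N : ℝ≥0) * V)) := by
      have he : Measure.map Z μ
          = Measure.map (· + d) (Measure.map (fun ω => (∑ i, ε i ω) * c) μ) := by
        rw [Measure.map_map (measurable_add_const d) (hSm.mul_const c)]
        rw [hZeq]
        rfl
      rw [he, h1, gaussianReal_map_add_const]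
    rw [h2]
    congr 1
    · rw [hc, hd, hm]; field_simp; ring
    · apply NNReal.coe_injective
      push_cast
      have hVcoe : (V : ℝ) = σ ^ 2 := rfl
      rw [hc, hVcoe, div_pow, mul_pow, hsq]
      field_simp
  -- CDF identities for Z
  have hmapIic : ∀ a : ℝ, (μ (Z ⁻¹' Set.Iic a)).toReal = Φ (a - m) := by
    intro a
    rw [← Measure.map_apply hZmeas measurableSet_Iic, hZlaw]
    have hshift : gaussianReal m 1 = Measure.map (· + m) (gaussianReal 0 1) := by
      rw [gaussianReal_map_add_const, zero_add]
    rw [hshift, Measure.map_apply (measurable_add_const m) measurableSet_Iic]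
    have hpre : (· + m) ⁻¹' Set.Iic a = Set.Iic (a - m) := by
      ext y; simp [le_sub_iff_add_le]
    rw [hpre, hΦ]
  have hmapIio : ∀ a : ℝ, (μ (Z ⁻¹' Set.Iio a)).toReal = Φ (a - m) := by
    intro a
    rw [← Measure.map_apply hZmeas measurableSet_Iio, hZlaw, g01_Iio,
      ← hZlaw, Measure.map_apply hZmeas measurableSet_Iic]
    exact hmapIic a
  have hmapIoi : ∀ a : ℝ, (μ (Z ⁻¹' Set.Ioi a)).toReal = 1 - Φ (a - m) := by
    intro a
    have hc1 : μ (Z ⁻¹' Set.Iic a) + μ (Z ⁻¹' Set.Ioi a) = 1 := by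
      have h := measure_add_measure_compl (μ := μ) (s := Z ⁻¹' Set.Iic a)
        (hZmeas measurableSet_Iic)
      rwa [← Set.preimage_compl, Set.compl_Iic, measure_univ] at h
    have := congrArg ENNReal.toReal hc1
    rw [ENNReal.toReal_add (measure_ne_top _ _) (measure_ne_top _ _),
      ENNReal.toReal_one, hmapIic a] at this
    linarith
  -- the two quantiles
  set a : ℝ := Φinv (x / 2) with hadef
  set b : ℝ := Φinv (1 - x / 2) with hbdef
  obtain ⟨hx0, hx1⟩ := hx
  have hΦa : Φ a = x / 2 := hΦinv _ ⟨by linarith, by linarith⟩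
  have hΦb : Φ b = 1 - x / 2 := hΦinv _ ⟨by linarith, by linarith⟩
  have hmono := phi_mono hΦ
  have hhalf := phi_half hΦ
  have ha0 : a < 0 := by
    apply hmono.lt_iff_lt.mp
    rw [hΦa, hhalf]; linarith
  have hb0 : 0 < b := by
    apply hmono.lt_iff_lt.mp
    rw [hΦb, hhalf]; linarith
  -- event decomposition
  have hset : {ω | X ω < x} = Z ⁻¹' Set.Iio a ∪ Z ⁻¹' Set.Ioi b := by
    ext ω
    simp only [Set.mem_setOf_eq, Set.mem_union, Set.mem_preimage, Set.mem_Iio, Set.mem_Ioi,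
      hX ω]
    by_cases hzω : Z ω ≤ 0
    · rw [if_pos hzω]
      constructor
      · intro h
        left
        apply hmono.lt_iff_lt.mp
        rw [hΦa]; linarith
      · rintro (h | h)
        · have := hmono h; rw [hΦa] at this; linarith
        · exfalso; linarith
    · rw [if_neg hzω]
      push_neg at hzω
      constructor
      · intro h
        right
        apply hmono.lt_iff_lt.mp
        rw [hΦb]; linarith
      · rintro (h | h)
        · exfalso; linarith
        · have := hmono h; rw [hΦb] at this; linarith
  rw [hset]
  have hdisj : Disjoint (Z ⁻¹' Set.Iio a) (Z ⁻¹' Set.Ioi b) :=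
    Disjoint.preimage Z ((Set.Iic_disjoint_Ioi (by linarith : a ≤ b)).mono
      Set.Iio_subset_Iic_self le_rfl)
  rw [measure_union hdisj (hZmeas measurableSet_Ioi),
    ENNReal.toReal_add (measure_ne_top _ _) (measure_ne_top _ _), hmapIio a, hmapIoi b]
  have hargs : a - m = a + (μ₀ - μA) * sN / σ ∧ b - m = b + (μ₀ - μA) * sN / σ := by
    constructor <;> (rw [hm]; field_simp; ring)
  rw [hargs.1, hargs.2]
  ring
end
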